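/- arXiv:2412.11110 — 3 statements merged into one kernel-verified Lean document; each statement's English description precedes it below -/
import Mathlib

section
/- Let D = ℍ[K,a,b] be a division ring with ν_K(a) = 0 and ν_K(b) ∈ {0,1}, and set j = 1 if ν_K(b) = 0 and j = 2 if ν_K(b) = 1. Let σ = τ_λ with λ ∈ {1, x, y}, let ε ∈ {1,-1}, and let u ∈ D be a nonzero ε-symmetric element (σ(u) = ε·u). Then there exists an invertible t ∈ D such that σ(t)·u·t = δ + αx + βy + γz with δ, α, β, γ ∈ O_K and ν_D(σ(t)·u·t) ∈ {0, 1/j}. In other words, every one-dimensional ε-hermitian form over (D, σ) has, up to isometry, a diagonal entry with coordinates in O_K and valuation 0 or 1/j. -/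
noncomputable section

/-- A surjective discrete valuation `ν : K → ℤ` on a field `K`
(the value of `ν` at `0` is irrelevant: only nonzero elements are constrained). -/
structure DVal (K : Type) [Field K] : Type where
  ν : K → ℤ
  ν_mul : ∀ x y : K, x ≠ 0 → y ≠ 0 → ν (x * y) = ν x + ν y
  ν_add : ∀ x y : K, x ≠ 0 → y ≠ 0 → x + y ≠ 0 → min (ν x) (ν y) ≤ ν (x + y)
  ν_one : ν 1 = 0
  ν_surj : ∀ n : ℤ, ∃ x : K, x ≠ 0 ∧ ν x = n

namespace DVal

variable {K : Type} [Field K]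

/-- `x` belongs to the valuation ring `O_K`. -/
def Int (V : DVal K) (x : K) : Prop := x = 0 ∨ 0 ≤ V.ν x

/-- `x` is a unit of the valuation ring `O_K`. -/
def IntUnit (V : DVal K) (x : K) : Prop := x ≠ 0 ∧ V.ν x = 0

/-- `x` belongs to the maximal ideal `m_K` of the valuation ring `O_K`. -/
def MaxIdeal (V : DVal K) (x : K) : Prop := x = 0 ∨ 1 ≤ V.ν x

/-- `K` is complete with respect to the valuation `ν`: every Cauchy sequence converges. -/
def IsComplete (V : DVal K) : Prop :=
  ∀ f : ℕ → K,
    (∀ M : ℤ, ∃ N : ℕ, ∀ m n : ℕ, N ≤ m → N ≤ n →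
      f m - f n = 0 ∨ M ≤ V.ν (f m - f n)) →
    ∃ L : K, ∀ M : ℤ, ∃ N : ℕ, ∀ n : ℕ, N ≤ n →
      f n - L = 0 ∨ M ≤ V.ν (f n - L)

/-- The residue field `k = O_K/m_K` has characteristic different from `2`,
i.e. `2` is a unit of the valuation ring `O_K`. -/
def ResCharNeTwo (V : DVal K) : Prop := (2 : K) ≠ 0 ∧ V.ν 2 = 0

end DVal

/-- The reduced norm of a quaternion `u = δ + αx + βy + γz ∈ ℍ[K,a,b]`:
`Nrd u = u·τ(u) = δ² - aα² - bβ² + abγ²`. -/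
def qnrd {K : Type} [Field K] (a b : K) (u : QuaternionAlgebra K a 0 b) : K :=
  u.re ^ 2 - a * u.imI ^ 2 - b * u.imJ ^ 2 + a * b * u.imK ^ 2

/-- The canonical involution `τ(δ + αx + βy + γz) = δ - αx - βy - γz` of `ℍ[K,a,b]`. -/
def qtau {K : Type} [Field K] {a b : K} (u : QuaternionAlgebra K a 0 b) :
    QuaternionAlgebra K a 0 b :=
  ⟨u.re, -u.imI, -u.imJ, -u.imK⟩

/-- The norm form `⟨1,-a,-b,ab⟩` of `ℍ[K,a,b]` is anisotropic over `K`
(equivalently, `ℍ[K,a,b]` is a division ring). -/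
def QAniso {K : Type} [Field K] (a b : K) : Prop :=
  ∀ d e f g : K, d ^ 2 - a * e ^ 2 - b * f ^ 2 + a * b * g ^ 2 = 0 →
    d = 0 ∧ e = 0 ∧ f = 0 ∧ g = 0

/-- The valuation `ν_D(u) = (1/2)·ν_K(Nrd u)` of the quaternion division algebra
`D = ℍ[K,a,b]` (at nonzero `u`). -/
def qnu {K : Type} [Field K] (V : DVal K) (a b : K) (u : QuaternionAlgebra K a 0 b) : ℚ :=
  (V.ν (qnrd a b u) : ℚ) / 2

namespace S17
variable {K : Type} [Field K] (V : DVal K)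

/-- `x = 0` or `ν x ≥ M`. -/
def Ge (M : ℤ) (x : K) : Prop := x = 0 ∨ M ≤ V.ν x

variable {V}

lemma nu_neg_one : V.ν (-1 : K) = 0 := by
  have h := V.ν_mul (-1) (-1) (by norm_num) (by norm_num)
  norm_num [V.ν_one] at h
  omega

lemma nu_neg {x : K} (hx : x ≠ 0) : V.ν (-x) = V.ν x := by
  have h := V.ν_mul (-1) x (by norm_num) hx
  rw [neg_one_mul] at h
  rw [h, nu_neg_one, zero_add]

lemma nu_inv {x : K} (hx : x ≠ 0) : V.ν x⁻¹ = - V.ν x := by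
  have h := V.ν_mul x x⁻¹ hx (inv_ne_zero hx)
  rw [mul_inv_cancel₀ hx, V.ν_one] at h
  omega

lemma nu_div {x y : K} (hx : x ≠ 0) (hy : y ≠ 0) : V.ν (x / y) = V.ν x - V.ν y := by
  rw [div_eq_mul_inv, V.ν_mul x y⁻¹ hx (inv_ne_zero hy), nu_inv hy]; ring

lemma nu_pow {x : K} (hx : x ≠ 0) (n : ℕ) : V.ν (x ^ n) = n * V.ν x := by
  induction n with
  | zero => simpa using V.ν_one
  | succ k ih =>
    rw [pow_succ, V.ν_mul _ _ (pow_ne_zero _ hx) hx, ih]; push_cast; ring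

lemma nu_zpow {x : K} (hx : x ≠ 0) (n : ℤ) : V.ν (x ^ n) = n * V.ν x := by
  cases n with
  | ofNat k => rw [Int.ofNat_eq_coe, zpow_natCast, nu_pow hx]
  | negSucc k =>
      rw [zpow_negSucc, nu_inv (pow_ne_zero _ hx), nu_pow hx]
      rw [Int.negSucc_eq]; push_cast; ring

lemma nu_sq {x : K} (hx : x ≠ 0) : V.ν (x ^ 2) = 2 * V.ν x := nu_pow hx 2

lemma Ge.mono {M M' : ℤ} (h : M' ≤ M) {x : K} (hx : Ge V M x) : Ge V M' x := by
  rcases hx with h0 | h1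
  · exact Or.inl h0
  · exact Or.inr (le_trans h h1)

lemma Ge.neg {M : ℤ} {x : K} (hx : Ge V M x) : Ge V M (-x) := by
  rcases hx with h0 | h1
  · simp [h0, Ge]
  · by_cases h : x = 0
    · simp [h, Ge]
    · exact Or.inr (by rwa [nu_neg h])

lemma Ge.add {M : ℤ} {x y : K} (hx : Ge V M x) (hy : Ge V M y) : Ge V M (x + y) := by
  rcases hx with h0 | h1
  · simpa [h0] using hy
  · rcases hy with g0 | g1
    · rw [g0, add_zero]; exact Or.inr h1
    · by_cases hx0 : x = 0
      · rw [hx0, zero_add]; exact Or.inr g1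
      · by_cases hy0 : y = 0
        · rw [hy0, add_zero]; exact Or.inr h1
        · by_cases hxy : x + y = 0
          · exact Or.inl hxy
          · exact Or.inr (le_trans (le_min h1 g1) (V.ν_add x y hx0 hy0 hxy))

lemma Ge.mul {M N : ℤ} {x y : K} (hx : Ge V M x) (hy : Ge V N y) : Ge V (M + N) (x * y) := by
  by_cases hx0 : x = 0
  · simp [hx0, Ge]
  by_cases hy0 : y = 0
  · simp [hy0, Ge]
  rcases hx with h0 | h1
  · exact absurd h0 hx0
  rcases hy with g0 | g1
  · exact absurd g0 hy0
  exact Or.inr (by rw [V.ν_mul x y hx0 hy0]; omega)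

lemma Ge.sq {M : ℤ} {x : K} (hx : Ge V M x) : Ge V (M + M) (x ^ 2) := by
  rw [pow_two]; exact hx.mul hx

lemma Ge.sub {M : ℤ} {x y : K} (hx : Ge V M x) (hy : Ge V M y) : Ge V M (x - y) := by
  rw [sub_eq_add_neg]; exact hx.add hy.neg

/-- Dominance: adding something of strictly bigger valuation keeps the valuation. -/
lemma add_dom {x y : K} (hx : x ≠ 0) (hy : Ge V (V.ν x + 1) y) :
    x + y ≠ 0 ∧ V.ν (x + y) = V.ν x := by
  by_cases hy0 : y = 0
  · simp [hy0, hx]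
  rcases hy with h0 | h1
  · exact absurd h0 hy0
  have hxy : x + y ≠ 0 := by
    intro h
    have : y = -x := by linear_combination h
    rw [this, nu_neg hx] at h1; omega
  refine ⟨hxy, ?_⟩
  have h2 := V.ν_add x y hx hy0 hxy
  by_contra hne
  have h3 : V.ν x + 1 ≤ V.ν (x + y) := by omega
  have h4 := V.ν_add (x + y) (-y) hxy (neg_ne_zero.mpr hy0) (by simpa using hx)
  rw [nu_neg hy0] at h4
  simp only [add_neg_cancel_right] at h4
  omega



/-- Hensel's lemma for square roots. -/
lemma hensel_sqrt (hcomp : V.IsComplete) (h2 : (2:K) ≠ 0) (hn2 : V.ν 2 = 0)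
    {c r : K} (hr0 : r ≠ 0) (hrν : V.ν r = 0) (happ : Ge V 1 (r ^ 2 - c)) :
    ∃ s : K, s ≠ 0 ∧ s ^ 2 = c := by
  classical
  -- c is a unit
  have hr2 : V.ν (r ^ 2) = 0 := by rw [nu_sq hr0, hrν]; ring
  have hc : c ≠ 0 ∧ V.ν c = 0 := by
    obtain ⟨h1, h2⟩ := add_dom (x := r ^ 2) (y := -(r ^ 2 - c)) (pow_ne_zero _ hr0)
      (by rw [hr2]; exact happ.neg)
    have heq : r ^ 2 + -(r ^ 2 - c) = c := by ring
    rw [heq] at h1 h2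
    exact ⟨h1, by rw [h2, hr2]⟩
  -- Newton iteration
  set f : ℕ → K := fun n => Nat.rec r (fun _ x => (x + c / x) / 2) n with hf
  have hfs : ∀ n, f (n + 1) = (f n + c / f n) / 2 := fun n => rfl
  have hinv : ∀ n : ℕ, (f n ≠ 0 ∧ V.ν (f n) = 0) ∧ Ge V (n + 1) (f n ^ 2 - c) := by
    intro n
    induction n with
    | zero => exact ⟨⟨hr0, hrν⟩, happ⟩
    | succ k ih =>
      obtain ⟨⟨hx0, hxν⟩, he⟩ := ih
      set x := f k with hxdef
      have hsum : x ^ 2 + c ≠ 0 ∧ V.ν (x ^ 2 + c) = 0 := by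
        have h2c : (2 : K) * c ≠ 0 := mul_ne_zero h2 hc.1
        have h2cν : V.ν (2 * c) = 0 := by rw [V.ν_mul _ _ h2 hc.1, hn2, hc.2]; ring
        have := add_dom (x := 2 * c) (y := x ^ 2 - c) h2c
          (by rw [h2cν]; exact he.mono (by omega))
        constructor
        · intro h; exact this.1 (by linear_combination h)
        · have heq : x ^ 2 + c = 2 * c + (x ^ 2 - c) := by ring
          rw [heq]; rw [this.2, h2cν]
      have h2x : (2 : K) * x ≠ 0 := mul_ne_zero h2 hx0
      have h2xν : V.ν (2 * x) = 0 := by rw [V.ν_mul _ _ h2 hx0, hn2, hxν]; ring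
      have hfk1 : f (k + 1) = (x ^ 2 + c) / (2 * x) := by
        rw [hfs k, ← hxdef]; field_simp
      have hfk10 : f (k + 1) ≠ 0 := by
        rw [hfk1]; exact div_ne_zero hsum.1 h2x
      have hfk1ν : V.ν (f (k + 1)) = 0 := by
        rw [hfk1, nu_div hsum.1 h2x, hsum.2, h2xν]; ring
      refine ⟨⟨hfk10, hfk1ν⟩, ?_⟩
      have herr : f (k + 1) ^ 2 - c = (x ^ 2 - c) ^ 2 / (2 * x) ^ 2 := by
        rw [hfk1]; field_simp; ring
      rw [herr]
      by_cases hne : x ^ 2 - c = 0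
      · exact Or.inl (by rw [hne]; simp)
      have he1 : (k : ℤ) + 1 ≤ V.ν (x ^ 2 - c) := he.resolve_left hne
      refine Or.inr ?_
      rw [nu_div (pow_ne_zero _ hne) (pow_ne_zero _ h2x), nu_sq hne, nu_sq h2x, h2xν]
      push_cast
      omega
  -- Cauchy
  have hdiff : ∀ n : ℕ, Ge V (n + 1) (f (n + 1) - f n) := by
    intro n
    obtain ⟨⟨hx0, hxν⟩, he⟩ := hinv n
    have h2x : (2 : K) * f n ≠ 0 := mul_ne_zero h2 hx0
    have heq : f (n + 1) - f n = -((f n ^ 2 - c) / (2 * f n)) := by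
      rw [hfs n]; field_simp; ring
    rw [heq]
    refine Ge.neg ?_
    by_cases hne : f n ^ 2 - c = 0
    · rw [hne, zero_div]; exact Or.inl rfl
    have he1 : (n : ℤ) + 1 ≤ V.ν (f n ^ 2 - c) := he.resolve_left hne
    refine Or.inr ?_
    rw [nu_div hne h2x, V.ν_mul _ _ h2 hx0, hn2, hxν]
    omega
  have htel : ∀ n k : ℕ, Ge V (n + 1) (f (n + k) - f n) := by
    intro n k
    induction k with
    | zero => rw [Nat.add_zero, sub_self]; exact Or.inl rfl
    | succ j ih =>
      have h1 : f (n + (j + 1)) - f n = (f (n + j + 1) - f (n + j)) + (f (n + j) - f n) := by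
        have : n + (j + 1) = n + j + 1 := by omega
        rw [this]; ring
      rw [h1]
      exact Ge.add ((hdiff (n + j)).mono (by omega)) ih
  have hcauchy : ∀ M : ℤ, ∃ N : ℕ, ∀ m n : ℕ, N ≤ m → N ≤ n →
      f m - f n = 0 ∨ M ≤ V.ν (f m - f n) := by
    intro M
    refine ⟨M.toNat, fun m n hm hn => ?_⟩
    have hMt : M ≤ (M.toNat : ℤ) := Int.self_le_toNat M
    rcases le_total n m with h | h
    · obtain ⟨k, rfl⟩ := Nat.exists_eq_add_of_le h
      exact (htel n k).mono (by omega)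
    · obtain ⟨k, rfl⟩ := Nat.exists_eq_add_of_le h
      have := ((htel m k).mono (M' := M) (by omega)).neg
      simpa [neg_sub, Ge] using this
  obtain ⟨L, hL⟩ := hcomp f hcauchy
  -- L ^ 2 = c
  have hclaim : ∀ M : ℤ, Ge V M (L ^ 2 - c) := by
    intro M
    set M' : ℤ := max M 1 with hM'
    obtain ⟨N, hN⟩ := hL M'
    set n : ℕ := max N M.toNat with hn
    have hxL : Ge V M' (f n - L) := hN n (le_max_left _ _)
    obtain ⟨⟨hx0, hxν⟩, he⟩ := hinv n
    have hn1M : M ≤ (n : ℤ) + 1 := by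
      have : M ≤ (M.toNat : ℤ) := Int.self_le_toNat M
      have : (M.toNat : ℤ) ≤ (n : ℤ) := by exact_mod_cast Nat.le_max_right N M.toNat
      omega
    have hsplit : L ^ 2 - c = (L - f n) * (L + f n) + (f n ^ 2 - c) := by ring
    rw [hsplit]
    refine Ge.add ?_ (he.mono hn1M)
    have hLf : Ge V M' (L - f n) := by
      have := hxL.neg; simpa [neg_sub] using this
    have hLfn : Ge V 0 (L + f n) := by
      have hL' : Ge V 0 L := by
        have h1 : L = f n + -(f n - L) := by ring
        rw [h1]
        exact Ge.add (Or.inr (by omega)) (hxL.neg.mono (by omega))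
      exact hL'.add (Or.inr (by omega))
    exact (hLf.mul hLfn).mono (by omega)
  have hLc : L ^ 2 = c := by
    by_contra h
    have hne : L ^ 2 - c ≠ 0 := sub_ne_zero.mpr h
    rcases hclaim (V.ν (L ^ 2 - c) + 1) with h0 | h1
    · exact hne h0
    · omega
  have hL0 : L ≠ 0 := by
    intro h; rw [h] at hLc; simp at hLc; exact hc.1 hLc.symm
  exact ⟨L, hL0, hLc⟩



section Key

variable (hcomp : V.IsComplete) (h2 : (2:K) ≠ 0) (hn2 : V.ν 2 = 0)
variable {a b : K} (ha0 : a ≠ 0) (hva : V.ν a = 0) (hb0 : b ≠ 0)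
variable (haniso : ∀ d e f g : K, d ^ 2 - a * e ^ 2 - b * f ^ 2 + a * b * g ^ 2 = 0 →
    d = 0 ∧ e = 0 ∧ f = 0 ∧ g = 0)

include hcomp h2 hn2 ha0 hva hb0 haniso

/-- `⟨1,-a⟩` has no cancellation: if `d,e` integral and one is a unit then
`d² - a e²` is a unit. -/
lemma twoDim {d e : K} (hd : Ge V 0 d) (he : Ge V 0 e)
    (hu : V.IntUnit d ∨ V.IntUnit e) :
    d ^ 2 - a * e ^ 2 ≠ 0 ∧ V.ν (d ^ 2 - a * e ^ 2) = 0 := by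
  have hne : d ^ 2 - a * e ^ 2 ≠ 0 := by
    intro h
    have h4 : d ^ 2 - a * e ^ 2 - b * 0 ^ 2 + a * b * 0 ^ 2 = 0 := by linear_combination h
    obtain ⟨hd0, he0, -, -⟩ := haniso d e 0 0 h4
    rcases hu with h | h
    · exact h.1 hd0
    · exact h.1 he0
  refine ⟨hne, ?_⟩
  have hge : Ge V 0 (d ^ 2 - a * e ^ 2) := by
    have h1 : Ge V 0 (d ^ 2) := hd.sq.mono (by norm_num)
    have h2' : Ge V 0 (a * e ^ 2) := by
      have := (Ge.mul (V := V) (M := 0) (Or.inr hva.ge) he.sq)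
      exact this.mono (by norm_num)
    exact h1.sub h2'
  have hge0 : 0 ≤ V.ν (d ^ 2 - a * e ^ 2) := hge.resolve_left hne
  by_contra hne0
  have hge1 : Ge V 1 (d ^ 2 - a * e ^ 2) := Or.inr (by omega)
  -- some coordinate is a unit
  rcases hu with ⟨hd0, hdν⟩ | ⟨he0, heν⟩
  · -- d is a unit; c := a e² ≈ d²
    have happ : Ge V 1 (d ^ 2 - a * e ^ 2) := hge1
    obtain ⟨s, hs0, hs2⟩ := hensel_sqrt hcomp h2 hn2 hd0 hdν (c := a * e ^ 2) happ
    have h4 : s ^ 2 - a * e ^ 2 - b * 0 ^ 2 + a * b * 0 ^ 2 = 0 := by rw [hs2]; ring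
    obtain ⟨hS, -, -, -⟩ := haniso s e 0 0 h4
    exact hs0 hS
  · -- e is a unit, so ν(a e²) = 0; then d must be a unit too, else ν = 0 directly
    have hae : a * e ^ 2 ≠ 0 := mul_ne_zero ha0 (pow_ne_zero _ he0)
    have haeν : V.ν (a * e ^ 2) = 0 := by
      rw [V.ν_mul _ _ ha0 (pow_ne_zero _ he0), hva, nu_sq he0, heν]; ring
    by_cases hd0 : d = 0
    · rw [hd0] at hne0
      have : V.ν (0 ^ 2 - a * e ^ 2) = 0 := by
        rw [(by ring : (0:K) ^ 2 - a * e ^ 2 = -(a * e ^ 2)), nu_neg hae, haeν]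
      exact hne0 this
    have hdν : 0 ≤ V.ν d := hd.resolve_left hd0
    by_cases hdu : V.ν d = 0
    · -- d unit after all, same as first case
      obtain ⟨s, hs0, hs2⟩ := hensel_sqrt hcomp h2 hn2 hd0 hdu (c := a * e ^ 2) hge1
      have h4 : s ^ 2 - a * e ^ 2 - b * 0 ^ 2 + a * b * 0 ^ 2 = 0 := by rw [hs2]; ring
      obtain ⟨hS, -, -, -⟩ := haniso s e 0 0 h4
      exact hs0 hS
    · -- ν d ≥ 1, so ν(d² - ae²) = ν(ae²) = 0
      have h1 : V.ν (-(a * e ^ 2)) = 0 := by rw [nu_neg hae, haeν]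
      have := add_dom (x := -(a * e ^ 2)) (y := d ^ 2) (neg_ne_zero.mpr hae)
        (Or.inr (by rw [nu_sq hd0, h1]; omega))
      have heq : -(a * e ^ 2) + d ^ 2 = d ^ 2 - a * e ^ 2 := by ring
      rw [heq] at this
      exact hne0 (by rw [this.2, h1])

/-- Key lemma A : `ν b = 0` case. All coordinates integral, one a unit:
the norm form takes unit value. -/
lemma keyA (hvb : V.ν b = 0) {d e f g : K}
    (hd : Ge V 0 d) (he : Ge V 0 e) (hf : Ge V 0 f) (hg : Ge V 0 g)
    (hu : V.IntUnit d ∨ V.IntUnit e ∨ V.IntUnit f ∨ V.IntUnit g) :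
    d ^ 2 - a * e ^ 2 - b * f ^ 2 + a * b * g ^ 2 ≠ 0 ∧
      V.ν (d ^ 2 - a * e ^ 2 - b * f ^ 2 + a * b * g ^ 2) = 0 := by
  have hne : d ^ 2 - a * e ^ 2 - b * f ^ 2 + a * b * g ^ 2 ≠ 0 := by
    intro h
    obtain ⟨h1, h2', h3, h4⟩ := haniso d e f g h
    rcases hu with hh | hh | hh | hh
    · exact hh.1 h1
    · exact hh.1 h2'
    · exact hh.1 h3
    · exact hh.1 h4
  refine ⟨hne, ?_⟩
  have hva' : Ge V 0 a := Or.inr hva.ge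
  have hvb' : Ge V 0 b := Or.inr hvb.ge
  have hgeq : Ge V 0 (d ^ 2 - a * e ^ 2 - b * f ^ 2 + a * b * g ^ 2) := by
    have t1 : Ge V 0 (d ^ 2) := hd.sq.mono (by norm_num)
    have t2 : Ge V 0 (a * e ^ 2) := ((hva'.mul (he.sq.mono (M' := 0) (by norm_num)))).mono (by norm_num)
    have t3 : Ge V 0 (b * f ^ 2) := ((hvb'.mul (hf.sq.mono (M' := 0) (by norm_num)))).mono (by norm_num)
    have t4 : Ge V 0 (a * b * g ^ 2) :=
      (((hva'.mul hvb').mul (hg.sq.mono (M' := 0) (by norm_num)))).mono (by norm_num)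
    exact ((t1.sub t2).sub t3).add t4
  have hge0 : 0 ≤ V.ν (d ^ 2 - a * e ^ 2 - b * f ^ 2 + a * b * g ^ 2) := hgeq.resolve_left hne
  by_contra hne0
  have hq1 : Ge V 1 (d ^ 2 - a * e ^ 2 - b * f ^ 2 + a * b * g ^ 2) := Or.inr (by omega)
  have hab0 : a * b ≠ 0 := mul_ne_zero ha0 hb0
  have habν : V.ν (a * b) = 0 := by rw [V.ν_mul _ _ ha0 hb0, hva, hvb]; ring
  rcases hu with ⟨h0, hν⟩ | ⟨h0, hν⟩ | ⟨h0, hν⟩ | ⟨h0, hν⟩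
  · -- d unit : c = a e² + b f² - a b g²
    have happ : Ge V 1 (d ^ 2 - (a * e ^ 2 + b * f ^ 2 - a * b * g ^ 2)) := by
      have heq : d ^ 2 - (a * e ^ 2 + b * f ^ 2 - a * b * g ^ 2)
          = d ^ 2 - a * e ^ 2 - b * f ^ 2 + a * b * g ^ 2 := by ring
      rw [heq]; exact hq1
    obtain ⟨s, hs0, hs2⟩ := hensel_sqrt hcomp h2 hn2 h0 hν happ
    have h4 : s ^ 2 - a * e ^ 2 - b * f ^ 2 + a * b * g ^ 2 = 0 := by rw [hs2]; ring
    exact hs0 (haniso s e f g h4).1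
  · -- e unit : c = (d² - b f² + a b g²)/a ; approx root e ; error -q/a
    have happ : Ge V 1 (e ^ 2 - (d ^ 2 - b * f ^ 2 + a * b * g ^ 2) / a) := by
      have heq : e ^ 2 - (d ^ 2 - b * f ^ 2 + a * b * g ^ 2) / a
          = -(d ^ 2 - a * e ^ 2 - b * f ^ 2 + a * b * g ^ 2) / a := by
        field_simp; ring
      rw [heq]
      refine Or.inr ?_
      rw [nu_div (neg_ne_zero.mpr hne) ha0, nu_neg hne, hva]
      omega
    obtain ⟨s, hs0, hs2⟩ := hensel_sqrt hcomp h2 hn2 h0 hν happ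
    have h4 : d ^ 2 - a * s ^ 2 - b * f ^ 2 + a * b * g ^ 2 = 0 := by
      rw [hs2]; field_simp; ring
    exact hs0 (haniso d s f g h4).2.1
  · -- f unit : c = (d² - a e² + a b g²)/b
    have happ : Ge V 1 (f ^ 2 - (d ^ 2 - a * e ^ 2 + a * b * g ^ 2) / b) := by
      have heq : f ^ 2 - (d ^ 2 - a * e ^ 2 + a * b * g ^ 2) / b
          = -(d ^ 2 - a * e ^ 2 - b * f ^ 2 + a * b * g ^ 2) / b := by
        field_simp; ring
      rw [heq]
      refine Or.inr ?_
      rw [nu_div (neg_ne_zero.mpr hne) hb0, nu_neg hne, hvb]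
      omega
    obtain ⟨s, hs0, hs2⟩ := hensel_sqrt hcomp h2 hn2 h0 hν happ
    have h4 : d ^ 2 - a * e ^ 2 - b * s ^ 2 + a * b * g ^ 2 = 0 := by
      rw [hs2]; field_simp; ring
    exact hs0 (haniso d e s g h4).2.2.1
  · -- g unit : c = (a e² + b f² - d²)/(a b)
    have happ : Ge V 1 (g ^ 2 - (a * e ^ 2 + b * f ^ 2 - d ^ 2) / (a * b)) := by
      have heq : g ^ 2 - (a * e ^ 2 + b * f ^ 2 - d ^ 2) / (a * b)
          = (d ^ 2 - a * e ^ 2 - b * f ^ 2 + a * b * g ^ 2) / (a * b) := by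
        field_simp; ring
      rw [heq]
      refine Or.inr ?_
      rw [nu_div hne hab0, habν]
      omega
    obtain ⟨s, hs0, hs2⟩ := hensel_sqrt hcomp h2 hn2 h0 hν happ
    have h4 : d ^ 2 - a * e ^ 2 - b * f ^ 2 + a * b * s ^ 2 = 0 := by
      rw [hs2]; field_simp; ring
    exact hs0 (haniso d e f s h4).2.2.2

/-- Key lemma B1 : `ν b = 1` case, `d` or `e` a unit. -/
lemma keyB1 (hvb : V.ν b = 1) {d e f g : K}
    (hd : Ge V 0 d) (he : Ge V 0 e) (hf : Ge V 0 f) (hg : Ge V 0 g)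
    (hu : V.IntUnit d ∨ V.IntUnit e) :
    d ^ 2 - a * e ^ 2 - b * f ^ 2 + a * b * g ^ 2 ≠ 0 ∧
      V.ν (d ^ 2 - a * e ^ 2 - b * f ^ 2 + a * b * g ^ 2) = 0 := by
  obtain ⟨hA0, hAν⟩ := twoDim hcomp h2 hn2 ha0 hva hb0 haniso hd he hu
  have hB : Ge V 1 (-(b * (f ^ 2 - a * g ^ 2))) := by
    refine Ge.neg ?_
    have h1 : Ge V 0 (f ^ 2 - a * g ^ 2) := by
      have t1 : Ge V 0 (f ^ 2) := hf.sq.mono (by norm_num)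
      have t2 : Ge V 0 (a * g ^ 2) :=
        ((Ge.mul (V := V) (M := 0) (Or.inr hva.ge) (hg.sq.mono (M' := 0) (by norm_num)))).mono (by norm_num)
      exact t1.sub t2
    exact ((Ge.mul (V := V) (M := 1) (Or.inr hvb.ge) h1)).mono (by norm_num)
  have hdom := add_dom (x := d ^ 2 - a * e ^ 2) (y := -(b * (f ^ 2 - a * g ^ 2))) hA0
    (by rw [hAν]; exact hB)
  have heq : d ^ 2 - a * e ^ 2 + -(b * (f ^ 2 - a * g ^ 2))
      = d ^ 2 - a * e ^ 2 - b * f ^ 2 + a * b * g ^ 2 := by ring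
  rw [heq] at hdom
  exact ⟨hdom.1, by rw [hdom.2, hAν]⟩

/-- Key lemma B2 : `ν b = 1` case, `d,e` in the maximal ideal, `f` or `g` a unit. -/
lemma keyB2 (hvb : V.ν b = 1) {d e f g : K}
    (hd : Ge V 1 d) (he : Ge V 1 e) (hf : Ge V 0 f) (hg : Ge V 0 g)
    (hu : V.IntUnit f ∨ V.IntUnit g) :
    d ^ 2 - a * e ^ 2 - b * f ^ 2 + a * b * g ^ 2 ≠ 0 ∧
      V.ν (d ^ 2 - a * e ^ 2 - b * f ^ 2 + a * b * g ^ 2) = 1 := by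
  obtain ⟨hC0, hCν⟩ := twoDim hcomp h2 hn2 ha0 hva hb0 haniso hf hg hu
  have hB0 : -(b * (f ^ 2 - a * g ^ 2)) ≠ 0 := by
    exact neg_ne_zero.mpr (mul_ne_zero hb0 hC0)
  have hBν : V.ν (-(b * (f ^ 2 - a * g ^ 2))) = 1 := by
    rw [nu_neg (mul_ne_zero hb0 hC0), V.ν_mul _ _ hb0 hC0, hvb, hCν]; ring
  have hA : Ge V 2 (d ^ 2 - a * e ^ 2) := by
    have t1 : Ge V 2 (d ^ 2) := hd.sq.mono (by norm_num)
    have t2 : Ge V 2 (a * e ^ 2) :=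
      ((Ge.mul (V := V) (M := 0) (Or.inr hva.ge) (he.sq.mono (M' := 2) (by norm_num)))).mono (by norm_num)
    exact t1.sub t2
  have hdom := add_dom (x := -(b * (f ^ 2 - a * g ^ 2))) (y := d ^ 2 - a * e ^ 2) hB0
    (by rw [hBν]; exact hA)
  have heq : -(b * (f ^ 2 - a * g ^ 2)) + (d ^ 2 - a * e ^ 2)
      = d ^ 2 - a * e ^ 2 - b * f ^ 2 + a * b * g ^ 2 := by ring
  rw [heq] at hdom
  exact ⟨hdom.1, by rw [hdom.2, hBν]⟩

end Key



lemma scaled_coord {s x y : K} (hs0 : s ≠ 0) {S : ℤ} (hS : V.ν s = S)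
    (hy : y = s * x ∨ y = -(s * x)) :
    (y = 0 ↔ x = 0) ∧ (x ≠ 0 → V.ν y = S + V.ν x) := by
  rcases hy with hy | hy <;> subst hy
  · exact ⟨by simp [hs0], fun h => by rw [V.ν_mul s x hs0 h, hS]⟩
  · exact ⟨by simp [hs0], fun h => by
      rw [nu_neg (mul_ne_zero hs0 h), V.ν_mul s x hs0 h, hS]⟩

section Main

variable (hcomp : V.IsComplete) (h2 : (2:K) ≠ 0) (hn2 : V.ν 2 = 0)
variable {a b : K} (ha0 : a ≠ 0) (hva : V.ν a = 0) (hb0 : b ≠ 0)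
variable (haniso : ∀ d e f g : K, d ^ 2 - a * e ^ 2 - b * f ^ 2 + a * b * g ^ 2 = 0 →
    d = 0 ∧ e = 0 ∧ f = 0 ∧ g = 0)

include hcomp h2 hn2 ha0 hva hb0 haniso

lemma main_step (hvb : V.ν b = 0 ∨ V.ν b = 1)
    (p : K) (hp0 : p ≠ 0) (hpν : V.ν p = 1)
    {x1 x2 x3 x4 s d e f g : K} (hs0 : s ≠ 0) {m S M : ℤ}
    (hl1 : x1 ≠ 0 → m ≤ 2 * V.ν x1)
    (hl2 : x2 ≠ 0 → m ≤ 2 * V.ν x2)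
    (hl3 : x3 ≠ 0 → m ≤ V.ν b + 2 * V.ν x3)
    (hl4 : x4 ≠ 0 → m ≤ V.ν b + 2 * V.ν x4)
    (hach : (x1 ≠ 0 ∧ 2 * V.ν x1 = m) ∨ (x2 ≠ 0 ∧ 2 * V.ν x2 = m)
      ∨ (x3 ≠ 0 ∧ V.ν b + 2 * V.ν x3 = m) ∨ (x4 ≠ 0 ∧ V.ν b + 2 * V.ν x4 = m))
    (hS : V.ν s = S) (hM : m + 2 * S = M)
    (hM01 : M = 0 ∨ (M = 1 ∧ V.ν b = 1) ∨ (M = 2 ∧ V.ν b = 0))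
    (hd : d = s * x1) (he : e = s * x2 ∨ e = -(s * x2))
    (hf : f = s * x3) (hg : g = s * x4 ∨ g = -(s * x4)) :
    (Ge V 0 d ∧ Ge V 0 e ∧ Ge V 0 f ∧ Ge V 0 g) ∧
      (d ^ 2 - a * e ^ 2 - b * f ^ 2 + a * b * g ^ 2 ≠ 0 ∧
        V.ν (d ^ 2 - a * e ^ 2 - b * f ^ 2 + a * b * g ^ 2) = M) := by
  obtain ⟨hdz, hdν⟩ := scaled_coord (V := V) hs0 hS (Or.inl hd)
  obtain ⟨hez, heν⟩ := scaled_coord (V := V) hs0 hS he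
  obtain ⟨hfz, hfν⟩ := scaled_coord (V := V) hs0 hS (Or.inl hf)
  obtain ⟨hgz, hgν⟩ := scaled_coord (V := V) hs0 hS hg
  have hM0 : 0 ≤ M := by rcases hM01 with h | ⟨h, _⟩ | ⟨h, _⟩ <;> omega
  have hvb1 : V.ν b ≤ 1 ∧ 0 ≤ V.ν b := by rcases hvb with h | h <;> omega
  -- integrality
  have hGd : Ge V 0 d := by
    by_cases h : x1 = 0
    · exact Or.inl (hdz.mpr h)
    · have h1 := hl1 h; have h2' := hdν h; exact Or.inr (by omega)
  have hGe : Ge V 0 e := by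
    by_cases h : x2 = 0
    · exact Or.inl (hez.mpr h)
    · have h1 := hl2 h; have h2' := heν h; exact Or.inr (by omega)
  have hGf : Ge V 0 f := by
    by_cases h : x3 = 0
    · exact Or.inl (hfz.mpr h)
    · have h1 := hl3 h; have h2' := hfν h; exact Or.inr (by omega)
  have hGg : Ge V 0 g := by
    by_cases h : x4 = 0
    · exact Or.inl (hgz.mpr h)
    · have h1 := hl4 h; have h2' := hgν h; exact Or.inr (by omega)
  refine ⟨⟨hGd, hGe, hGf, hGg⟩, ?_⟩
  rcases hM01 with hM0' | ⟨hM1', hvb1'⟩ | ⟨hM2', hvb0'⟩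
  · -- M = 0
    subst hM0'
    rcases hvb with hvb0' | hvb1'
    · -- ν b = 0 : use keyA
      have hu : V.IntUnit d ∨ V.IntUnit e ∨ V.IntUnit f ∨ V.IntUnit g := by
        rcases hach with ⟨h0, hm⟩ | ⟨h0, hm⟩ | ⟨h0, hm⟩ | ⟨h0, hm⟩
        · exact Or.inl ⟨fun hh => h0 (hdz.mp hh), by have := hdν h0; omega⟩
        · exact Or.inr (Or.inl ⟨fun hh => h0 (hez.mp hh), by have := heν h0; omega⟩)
        · exact Or.inr (Or.inr (Or.inl ⟨fun hh => h0 (hfz.mp hh), by have := hfν h0; omega⟩))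
        · exact Or.inr (Or.inr (Or.inr ⟨fun hh => h0 (hgz.mp hh), by have := hgν h0; omega⟩))
      exact keyA hcomp h2 hn2 ha0 hva hb0 haniso hvb0' hGd hGe hGf hGg hu
    · -- ν b = 1 : use keyB1
      have hu : V.IntUnit d ∨ V.IntUnit e := by
        rcases hach with ⟨h0, hm⟩ | ⟨h0, hm⟩ | ⟨h0, hm⟩ | ⟨h0, hm⟩
        · exact Or.inl ⟨fun hh => h0 (hdz.mp hh), by have := hdν h0; omega⟩
        · exact Or.inr ⟨fun hh => h0 (hez.mp hh), by have := heν h0; omega⟩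
        · exfalso; have := hfν h0; omega
        · exfalso; have := hgν h0; omega
      exact keyB1 hcomp h2 hn2 ha0 hva hb0 haniso hvb1' hGd hGe hGf hGg hu
  · -- M = 1, ν b = 1 : use keyB2
    subst hM1'
    have hGd1 : Ge V 1 d := by
      by_cases h : x1 = 0
      · exact Or.inl (hdz.mpr h)
      · have h1 := hl1 h; have h2' := hdν h; exact Or.inr (by omega)
    have hGe1 : Ge V 1 e := by
      by_cases h : x2 = 0
      · exact Or.inl (hez.mpr h)
      · have h1 := hl2 h; have h2' := heν h; exact Or.inr (by omega)
    have hu : V.IntUnit f ∨ V.IntUnit g := by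
      rcases hach with ⟨h0, hm⟩ | ⟨h0, hm⟩ | ⟨h0, hm⟩ | ⟨h0, hm⟩
      · exfalso; have := hdν h0; omega
      · exfalso; have := heν h0; omega
      · exact Or.inl ⟨fun hh => h0 (hfz.mp hh), by have := hfν h0; omega⟩
      · exact Or.inr ⟨fun hh => h0 (hgz.mp hh), by have := hgν h0; omega⟩
    exact keyB2 hcomp h2 hn2 ha0 hva hb0 haniso hvb1' hGd1 hGe1 hGf hGg hu
  · -- M = 2, ν b = 0 : divide by p and use keyA
    subst hM2'
    have hdiv : ∀ y : K, Ge V 1 y → Ge V 0 (y / p) := by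
      intro y hy
      rcases hy with h0 | h1
      · exact Or.inl (by rw [h0, zero_div])
      · by_cases hy0 : y = 0
        · exact Or.inl (by rw [hy0, zero_div])
        · exact Or.inr (by rw [nu_div hy0 hp0, hpν]; omega)
    have hGd1 : Ge V 1 d := by
      by_cases h : x1 = 0
      · exact Or.inl (hdz.mpr h)
      · have h1 := hl1 h; have h2' := hdν h; exact Or.inr (by omega)
    have hGe1 : Ge V 1 e := by
      by_cases h : x2 = 0
      · exact Or.inl (hez.mpr h)
      · have h1 := hl2 h; have h2' := heν h; exact Or.inr (by omega)
    have hGf1 : Ge V 1 f := by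
      by_cases h : x3 = 0
      · exact Or.inl (hfz.mpr h)
      · have h1 := hl3 h; have h2' := hfν h; exact Or.inr (by omega)
    have hGg1 : Ge V 1 g := by
      by_cases h : x4 = 0
      · exact Or.inl (hgz.mpr h)
      · have h1 := hl4 h; have h2' := hgν h; exact Or.inr (by omega)
    have hu : V.IntUnit (d / p) ∨ V.IntUnit (e / p) ∨ V.IntUnit (f / p) ∨
        V.IntUnit (g / p) := by
      rcases hach with ⟨h0, hm⟩ | ⟨h0, hm⟩ | ⟨h0, hm⟩ | ⟨h0, hm⟩
      · refine Or.inl ⟨div_ne_zero (fun hh => h0 (hdz.mp hh)) hp0, ?_⟩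
        rw [nu_div (fun hh => h0 (hdz.mp hh)) hp0, hpν]
        have := hdν h0; omega
      · refine Or.inr (Or.inl ⟨div_ne_zero (fun hh => h0 (hez.mp hh)) hp0, ?_⟩)
        rw [nu_div (fun hh => h0 (hez.mp hh)) hp0, hpν]
        have := heν h0; omega
      · refine Or.inr (Or.inr (Or.inl ⟨div_ne_zero (fun hh => h0 (hfz.mp hh)) hp0, ?_⟩))
        rw [nu_div (fun hh => h0 (hfz.mp hh)) hp0, hpν]
        have := hfν h0; omega
      · refine Or.inr (Or.inr (Or.inr ⟨div_ne_zero (fun hh => h0 (hgz.mp hh)) hp0, ?_⟩))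
        rw [nu_div (fun hh => h0 (hgz.mp hh)) hp0, hpν]
        have := hgν h0; omega
    obtain ⟨hq0, hqν⟩ := keyA hcomp h2 hn2 ha0 hva hb0 haniso hvb0'
      (hdiv d hGd1) (hdiv e hGe1) (hdiv f hGf1) (hdiv g hGg1) hu
    have hqeq : d ^ 2 - a * e ^ 2 - b * f ^ 2 + a * b * g ^ 2
        = p ^ 2 * ((d / p) ^ 2 - a * (e / p) ^ 2 - b * (f / p) ^ 2 + a * b * (g / p) ^ 2) := by
      field_simp
    rw [hqeq]
    constructor
    · exact mul_ne_zero (pow_ne_zero _ hp0) hq0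
    · rw [V.ν_mul _ _ (pow_ne_zero _ hp0) hq0, nu_sq hp0, hpν, hqν]; ring

end Main

section Quat

variable {a b : K}

lemma isUnit_of_inv (t s : QuaternionAlgebra K a 0 b) (h1 : t * s = 1) (h2 : s * t = 1) :
    IsUnit t := ⟨⟨t, s, h1, h2⟩, rfl⟩

lemma scalar_commute (c : K) (w : QuaternionAlgebra K a 0 b) :
    (⟨c,0,0,0⟩ : QuaternionAlgebra K a 0 b) * w = w * ⟨c,0,0,0⟩ := by
  ext <;> simp [QuaternionAlgebra.re_mul, QuaternionAlgebra.imI_mul,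
    QuaternionAlgebra.imJ_mul, QuaternionAlgebra.imK_mul] <;> ring

lemma scalar_mul_scalar (c d : K) :
    (⟨c,0,0,0⟩ : QuaternionAlgebra K a 0 b) * ⟨d,0,0,0⟩ = ⟨c * d,0,0,0⟩ := by
  ext <;> simp [QuaternionAlgebra.re_mul, QuaternionAlgebra.imI_mul,
    QuaternionAlgebra.imJ_mul, QuaternionAlgebra.imK_mul]

lemma y_mul_y (c d : K) :
    (⟨0,0,c,0⟩ : QuaternionAlgebra K a 0 b) * ⟨0,0,d,0⟩ = ⟨b * (c * d),0,0,0⟩ := by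
  ext <;> simp [QuaternionAlgebra.re_mul, QuaternionAlgebra.imI_mul,
    QuaternionAlgebra.imJ_mul, QuaternionAlgebra.imK_mul] <;> ring

lemma one_mk : (1 : QuaternionAlgebra K a 0 b) = ⟨1,0,0,0⟩ := by
  ext <;> simp

lemma isUnit_scalar {c : K} (hc : c ≠ 0) :
    IsUnit (⟨c,0,0,0⟩ : QuaternionAlgebra K a 0 b) := by
  refine isUnit_of_inv _ ⟨c⁻¹,0,0,0⟩ ?_ ?_ <;>
    rw [scalar_mul_scalar, one_mk] <;> ext <;>
    simp [mul_inv_cancel₀ hc, inv_mul_cancel₀ hc]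

lemma isUnit_quaty {c : K} (hb0 : b ≠ 0) (hc : c ≠ 0) :
    IsUnit (⟨0,0,c,0⟩ : QuaternionAlgebra K a 0 b) := by
  refine isUnit_of_inv _ ⟨0,0,c⁻¹*b⁻¹,0⟩ ?_ ?_ <;>
    rw [y_mul_y, one_mk] <;> ext <;> field_simp <;> ring
lemma qtau_scalar (c : K) : qtau (⟨c,0,0,0⟩ : QuaternionAlgebra K a 0 b) = ⟨c,0,0,0⟩ := by
  simp [qtau]

lemma scalar_sandwich (c : K) (u : QuaternionAlgebra K a 0 b) :
    (⟨c,0,0,0⟩ : QuaternionAlgebra K a 0 b) * u * ⟨c,0,0,0⟩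
      = ⟨c * c * u.re, c * c * u.imI, c * c * u.imJ, c * c * u.imK⟩ := by
  ext <;> simp [QuaternionAlgebra.re_mul, QuaternionAlgebra.imI_mul,
    QuaternionAlgebra.imJ_mul, QuaternionAlgebra.imK_mul] <;> ring

lemma y_sandwich_1 (c : K) (u : QuaternionAlgebra K a 0 b) :
    ((1 : QuaternionAlgebra K a 0 b) * qtau (⟨0,0,c,0⟩ : QuaternionAlgebra K a 0 b) * 1) * u
        * ⟨0,0,c,0⟩
      = ⟨-(c * c * b) * u.re, -(-(c * c * b) * u.imI),
          -(c * c * b) * u.imJ, -(-(c * c * b) * u.imK)⟩ := by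
  ext <;> simp [qtau, QuaternionAlgebra.re_mul, QuaternionAlgebra.imI_mul,
    QuaternionAlgebra.imJ_mul, QuaternionAlgebra.imK_mul] <;> ring

lemma y_sandwich_x (ha0 : a ≠ 0) (c : K) (u : QuaternionAlgebra K a 0 b) :
    ((⟨0,1,0,0⟩ : QuaternionAlgebra K a 0 b) * qtau (⟨0,0,c,0⟩ : QuaternionAlgebra K a 0 b)
        * ⟨0,a⁻¹,0,0⟩) * u * ⟨0,0,c,0⟩
      = ⟨(c * c * b) * u.re, -((c * c * b) * u.imI),
          (c * c * b) * u.imJ, -((c * c * b) * u.imK)⟩ := by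
  ext <;> simp [qtau, QuaternionAlgebra.re_mul, QuaternionAlgebra.imI_mul,
    QuaternionAlgebra.imJ_mul, QuaternionAlgebra.imK_mul] <;> field_simp <;> ring

lemma y_sandwich_y (hb0 : b ≠ 0) (c : K) (u : QuaternionAlgebra K a 0 b) :
    ((⟨0,0,1,0⟩ : QuaternionAlgebra K a 0 b) * qtau (⟨0,0,c,0⟩ : QuaternionAlgebra K a 0 b)
        * ⟨0,0,b⁻¹,0⟩) * u * ⟨0,0,c,0⟩
      = ⟨-(c * c * b) * u.re, -(-(c * c * b) * u.imI),
          -(c * c * b) * u.imJ, -(-(c * c * b) * u.imK)⟩ := by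
  ext <;> simp [qtau, QuaternionAlgebra.re_mul, QuaternionAlgebra.imI_mul,
    QuaternionAlgebra.imJ_mul, QuaternionAlgebra.imK_mul] <;> field_simp <;> ring

lemma x_inv (ha0 : a ≠ 0) :
    (⟨0,1,0,0⟩ : QuaternionAlgebra K a 0 b) * ⟨0,a⁻¹,0,0⟩ = 1 := by
  ext <;> simp [QuaternionAlgebra.re_mul, QuaternionAlgebra.imI_mul,
    QuaternionAlgebra.imJ_mul, QuaternionAlgebra.imK_mul] <;> field_simp

lemma y_inv (hb0 : b ≠ 0) :
    (⟨0,0,1,0⟩ : QuaternionAlgebra K a 0 b) * ⟨0,0,b⁻¹,0⟩ = 1 := by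
  ext <;> simp [QuaternionAlgebra.re_mul, QuaternionAlgebra.imI_mul,
    QuaternionAlgebra.imJ_mul, QuaternionAlgebra.imK_mul] <;> field_simp

lemma mu_eq {lam mu m0 : QuaternionAlgebra K a 0 b} (hmu' : mu * lam = 1)
    (h : lam * m0 = 1) : mu = m0 := by
  calc mu = mu * (lam * m0) := by rw [h, mul_one]
  _ = (mu * lam) * m0 := by rw [mul_assoc]
  _ = m0 := by rw [hmu', one_mul]

/-- Existence of the weighted minimum valuation of the coordinates. -/
lemma weighted_min (u : QuaternionAlgebra K a 0 b) (hu0 : u ≠ 0) :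
    ∃ m : ℤ,
      ((u.re ≠ 0 → m ≤ 2 * V.ν u.re) ∧ (u.imI ≠ 0 → m ≤ 2 * V.ν u.imI) ∧
       (u.imJ ≠ 0 → m ≤ V.ν b + 2 * V.ν u.imJ) ∧
       (u.imK ≠ 0 → m ≤ V.ν b + 2 * V.ν u.imK)) ∧
      ((u.re ≠ 0 ∧ 2 * V.ν u.re = m) ∨ (u.imI ≠ 0 ∧ 2 * V.ν u.imI = m)
        ∨ (u.imJ ≠ 0 ∧ V.ν b + 2 * V.ν u.imJ = m)
        ∨ (u.imK ≠ 0 ∧ V.ν b + 2 * V.ν u.imK = m)) := by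
  classical
  set A : ℤ → K → WithTop ℤ :=
    fun w x => if x = 0 then ⊤ else ((w + 2 * V.ν x : ℤ) : WithTop ℤ) with hA
  have hAne : ∀ w (x : K), x ≠ 0 → A w x = ((w + 2 * V.ν x : ℤ) : WithTop ℤ) :=
    fun w x h => if_neg h
  have hAtop : ∀ w (x : K), A w x = ⊤ → x = 0 := by
    intro w x h
    by_contra hx
    rw [hAne w x hx] at h
    exact WithTop.coe_ne_top h
  set mv := min (min (A 0 u.re) (A 0 u.imI)) (min (A (V.ν b) u.imJ) (A (V.ν b) u.imK))
    with hmv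
  have hne : mv ≠ ⊤ := by
    intro h
    rw [hmv] at h
    simp only [min_eq_top] at h
    apply hu0
    ext
    · simpa using hAtop _ _ h.1.1
    · simpa using hAtop _ _ h.1.2
    · simpa using hAtop _ _ h.2.1
    · simpa using hAtop _ _ h.2.2
  obtain ⟨m, hm⟩ := WithTop.ne_top_iff_exists.mp hne
  refine ⟨m, ?_, ?_⟩
  · have hb1 : mv ≤ A 0 u.re := le_trans (min_le_left _ _) (min_le_left _ _)
    have hb2 : mv ≤ A 0 u.imI := le_trans (min_le_left _ _) (min_le_right _ _)
    have hb3 : mv ≤ A (V.ν b) u.imJ := le_trans (min_le_right _ _) (min_le_left _ _)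
    have hb4 : mv ≤ A (V.ν b) u.imK := le_trans (min_le_right _ _) (min_le_right _ _)
    refine ⟨fun h => ?_, fun h => ?_, fun h => ?_, fun h => ?_⟩
    · rw [← hm, hAne _ _ h] at hb1
      have := WithTop.coe_le_coe.mp hb1; omega
    · rw [← hm, hAne _ _ h] at hb2
      have := WithTop.coe_le_coe.mp hb2; omega
    · rw [← hm, hAne _ _ h] at hb3
      have := WithTop.coe_le_coe.mp hb3; omega
    · rw [← hm, hAne _ _ h] at hb4
      have := WithTop.coe_le_coe.mp hb4; omega
  · have hconv : ∀ w (x : K), mv = A w x → x ≠ 0 ∧ w + 2 * V.ν x = m := by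
      intro w x hx
      have hx0 : x ≠ 0 := by
        intro h0
        apply hne
        rw [hx, hA]; simp [h0]
      refine ⟨hx0, ?_⟩
      rw [hAne w x hx0, ← hm] at hx
      exact_mod_cast hx.symm
    rcases min_choice (min (A 0 u.re) (A 0 u.imI)) (min (A (V.ν b) u.imJ) (A (V.ν b) u.imK))
      with h12 | h34
    · rcases min_choice (A 0 u.re) (A 0 u.imI) with hh | hh
      · obtain ⟨hx0, hx⟩ := hconv 0 u.re (hmv.trans (h12.trans hh))
        exact Or.inl ⟨hx0, by omega⟩
      · obtain ⟨hx0, hx⟩ := hconv 0 u.imI (hmv.trans (h12.trans hh))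
        exact Or.inr (Or.inl ⟨hx0, by omega⟩)
    · rcases min_choice (A (V.ν b) u.imJ) (A (V.ν b) u.imK) with hh | hh
      · obtain ⟨hx0, hx⟩ := hconv (V.ν b) u.imJ (hmv.trans (h34.trans hh))
        exact Or.inr (Or.inr (Or.inl ⟨hx0, by omega⟩))
      · obtain ⟨hx0, hx⟩ := hconv (V.ν b) u.imK (hmv.trans (h34.trans hh))
        exact Or.inr (Or.inr (Or.inr ⟨hx0, by omega⟩))

end Quat

section Assemble

variable (hcomp : V.IsComplete) (h2 : (2:K) ≠ 0) (hn2 : V.ν 2 = 0)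
variable {a b : K} (ha0 : a ≠ 0) (hva : V.ν a = 0) (hb0 : b ≠ 0)
variable (haniso : ∀ d e f g : K, d ^ 2 - a * e ^ 2 - b * f ^ 2 + a * b * g ^ 2 = 0 →
    d = 0 ∧ e = 0 ∧ f = 0 ∧ g = 0)

include hcomp h2 hn2 ha0 hva hb0 haniso

lemma assemble (hvb : V.ν b = 0 ∨ V.ν b = 1)
    (p : K) (hp0 : p ≠ 0) (hpν : V.ν p = 1)
    (u v : QuaternionAlgebra K a 0 b) {s : K} (hs0 : s ≠ 0) {m S M : ℤ}
    (hl1 : u.re ≠ 0 → m ≤ 2 * V.ν u.re)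
    (hl2 : u.imI ≠ 0 → m ≤ 2 * V.ν u.imI)
    (hl3 : u.imJ ≠ 0 → m ≤ V.ν b + 2 * V.ν u.imJ)
    (hl4 : u.imK ≠ 0 → m ≤ V.ν b + 2 * V.ν u.imK)
    (hach : (u.re ≠ 0 ∧ 2 * V.ν u.re = m) ∨ (u.imI ≠ 0 ∧ 2 * V.ν u.imI = m)
      ∨ (u.imJ ≠ 0 ∧ V.ν b + 2 * V.ν u.imJ = m)
      ∨ (u.imK ≠ 0 ∧ V.ν b + 2 * V.ν u.imK = m))
    (hS : V.ν s = S) (hM : m + 2 * S = M)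
    (hM01 : M = 0 ∨ (M = 1 ∧ V.ν b = 1) ∨ (M = 2 ∧ V.ν b = 0))
    (hv : v = (⟨s * u.re, s * u.imI, s * u.imJ, s * u.imK⟩ : QuaternionAlgebra K a 0 b)
      ∨ v = (⟨s * u.re, -(s * u.imI), s * u.imJ, -(s * u.imK)⟩ : QuaternionAlgebra K a 0 b)) :
    (V.Int v.re ∧ V.Int v.imI ∧ V.Int v.imJ ∧ V.Int v.imK) ∧
      (qnrd a b v ≠ 0 ∧ V.ν (qnrd a b v) = M) := by
  have hvre : v.re = s * u.re := by rcases hv with hv | hv <;> rw [hv]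
  have hvI : v.imI = s * u.imI ∨ v.imI = -(s * u.imI) := by
    rcases hv with hv | hv
    · exact Or.inl (by rw [hv])
    · exact Or.inr (by rw [hv])
  have hvJ : v.imJ = s * u.imJ := by rcases hv with hv | hv <;> rw [hv]
  have hvK : v.imK = s * u.imK ∨ v.imK = -(s * u.imK) := by
    rcases hv with hv | hv
    · exact Or.inl (by rw [hv])
    · exact Or.inr (by rw [hv])
  obtain ⟨⟨g1, g2, g3, g4⟩, hq0, hqν⟩ :=
    main_step hcomp h2 hn2 ha0 hva hb0 haniso hvb p hp0 hpν hs0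
      hl1 hl2 hl3 hl4 hach hS hM hM01 hvre hvI hvJ hvK
  have hqeq : qnrd a b v
      = v.re ^ 2 - a * v.imI ^ 2 - b * v.imJ ^ 2 + a * b * v.imK ^ 2 := rfl
  exact ⟨⟨g1, g2, g3, g4⟩, by rw [hqeq]; exact hq0, by rw [hqeq, hqν]⟩

end Assemble

end S17

/-- every one-dimensional ε-hermitian form over `(ℍ[K,a,b], τ_λ)`,
`λ ∈ {1,x,y}`, is isometric to one whose diagonal entry has coordinates in `O_K` and
valuation `0` or `1/j`. -/
theorem stmt_17 (K : Type) [Field K] (V : DVal K)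
    (hcomp : V.IsComplete) (hchar : V.ResCharNeTwo)
    -- D = ℍ[K,a,b] a division ring with ν(a) = 0, ν(b) ∈ {0,1}, and j accordingly
    (a b : K) (ha0 : a ≠ 0) (hva : V.ν a = 0) (hb0 : b ≠ 0)
    (j : ℕ) (hj : (V.ν b = 0 ∧ j = 1) ∨ (V.ν b = 1 ∧ j = 2))
    (haniso : QAniso a b)
    -- σ = τ_λ with λ ∈ {1, x, y} (μ = λ⁻¹)
    (lam mu : QuaternionAlgebra K a 0 b)
    (hlam : lam = 1 ∨ lam = (⟨0, 1, 0, 0⟩ : QuaternionAlgebra K a 0 b)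
        ∨ lam = (⟨0, 0, 1, 0⟩ : QuaternionAlgebra K a 0 b))
    (hmu : lam * mu = 1) (hmu' : mu * lam = 1)
    (σ : QuaternionAlgebra K a 0 b → QuaternionAlgebra K a 0 b)
    (hσ : ∀ u, σ u = lam * qtau u * mu)
    -- ε ∈ {1, -1} and u is a nonzero ε-symmetric element
    (ε : K) (hε : ε = 1 ∨ ε = -1)
    (u : QuaternionAlgebra K a 0 b) (hu0 : u ≠ 0) (hsym : σ u = ε • u) :
    ∃ t : QuaternionAlgebra K a 0 b, IsUnit t ∧
      V.Int (σ t * u * t).re ∧ V.Int (σ t * u * t).imI ∧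
      V.Int (σ t * u * t).imJ ∧ V.Int (σ t * u * t).imK ∧
      (qnu V a b (σ t * u * t) = 0 ∨ qnu V a b (σ t * u * t) = 1 / (j : ℚ)) := by
  classical
  obtain ⟨h2, hn2⟩ := hchar
  have hvb : V.ν b = 0 ∨ V.ν b = 1 := by
    rcases hj with ⟨h, _⟩ | ⟨h, _⟩
    exacts [Or.inl h, Or.inr h]
  obtain ⟨p, hp0, hpν⟩ := V.ν_surj 1
  obtain ⟨m, ⟨hl1, hl2, hl3, hl4⟩, hach⟩ := S17.weighted_min (V := V) (a := a) (b := b) u hu0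
  have haniso' : ∀ d e f g : K, d ^ 2 - a * e ^ 2 - b * f ^ 2 + a * b * g ^ 2 = 0 →
      d = 0 ∧ e = 0 ∧ f = 0 ∧ g = 0 := haniso
  -- the two families of transformations
  have scalarT : ∀ n : ℤ, ∃ t : QuaternionAlgebra K a 0 b, IsUnit t ∧ ∃ s : K, s ≠ 0 ∧
      V.ν s = 2 * n ∧ σ t * u * t
        = (⟨s * u.re, s * u.imI, s * u.imJ, s * u.imK⟩ : QuaternionAlgebra K a 0 b) := by
    intro n
    have hc0 : p ^ n ≠ 0 := zpow_ne_zero _ hp0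
    have hcν : V.ν (p ^ n) = n := by rw [S17.nu_zpow hp0, hpν, mul_one]
    refine ⟨⟨p ^ n, 0, 0, 0⟩, S17.isUnit_scalar hc0, p ^ n * p ^ n,
      mul_ne_zero hc0 hc0, ?_, ?_⟩
    · rw [V.ν_mul _ _ hc0 hc0, hcν]; ring
    · have hσt : σ (⟨p ^ n, 0, 0, 0⟩ : QuaternionAlgebra K a 0 b) = ⟨p ^ n, 0, 0, 0⟩ := by
        rw [hσ, S17.qtau_scalar, ← S17.scalar_commute, mul_assoc, hmu, mul_one]
      rw [hσt, S17.scalar_sandwich]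
  have twistT : ∀ n : ℤ, ∃ t : QuaternionAlgebra K a 0 b, IsUnit t ∧ ∃ s : K, s ≠ 0 ∧
      V.ν s = 2 * n + V.ν b ∧ σ t * u * t
        = (⟨s * u.re, -(s * u.imI), s * u.imJ, -(s * u.imK)⟩ :
            QuaternionAlgebra K a 0 b) := by
    intro n
    have hc0 : p ^ n ≠ 0 := zpow_ne_zero _ hp0
    have hcν : V.ν (p ^ n) = n := by rw [S17.nu_zpow hp0, hpν, mul_one]
    have hccb0 : p ^ n * p ^ n * b ≠ 0 := mul_ne_zero (mul_ne_zero hc0 hc0) hb0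
    have hccbν : V.ν (p ^ n * p ^ n * b) = 2 * n + V.ν b := by
      rw [V.ν_mul _ _ (mul_ne_zero hc0 hc0) hb0, V.ν_mul _ _ hc0 hc0, hcν]; ring
    refine ⟨⟨0, 0, p ^ n, 0⟩, S17.isUnit_quaty hb0 hc0, ?_⟩
    rcases hlam with h1 | hx | hy
    · have hmu1 : mu = 1 := by rw [h1, one_mul] at hmu; exact hmu
      refine ⟨-(p ^ n * p ^ n * b), neg_ne_zero.mpr hccb0,
        by rw [S17.nu_neg hccb0, hccbν], ?_⟩
      rw [hσ, h1, hmu1]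
      exact S17.y_sandwich_1 (p ^ n) u
    · have hmux : mu = ⟨0, a⁻¹, 0, 0⟩ :=
        S17.mu_eq hmu' (by rw [hx]; exact S17.x_inv ha0)
      refine ⟨p ^ n * p ^ n * b, hccb0, hccbν, ?_⟩
      rw [hσ, hx, hmux]
      exact S17.y_sandwich_x ha0 (p ^ n) u
    · have hmuy : mu = ⟨0, 0, b⁻¹, 0⟩ :=
        S17.mu_eq hmu' (by rw [hy]; exact S17.y_inv hb0)
      refine ⟨-(p ^ n * p ^ n * b), neg_ne_zero.mpr hccb0,
        by rw [S17.nu_neg hccb0, hccbν], ?_⟩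
      rw [hσ, hy, hmuy]
      exact S17.y_sandwich_y hb0 (p ^ n) u
  rcases hvb with hvb0 | hvb1
  · -- ν b = 0, j = 1
    have hj1 : j = 1 := by
      rcases hj with ⟨_, h⟩ | ⟨h, _⟩
      · exact h
      · omega
    have hme : m % 2 = 0 := by
      rcases hach with ⟨_, h⟩ | ⟨_, h⟩ | ⟨_, h⟩ | ⟨_, h⟩ <;> omega
    by_cases h4 : m % 4 = 0
    · obtain ⟨t, ht, s, hs0, hsν, hv⟩ := scalarT (-(m / 4))
      obtain ⟨⟨i1, i2, i3, i4⟩, hq0, hqν⟩ :=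
        S17.assemble hcomp h2 hn2 ha0 hva hb0 haniso' (Or.inl hvb0) p hp0 hpν
          u (σ t * u * t) hs0 hl1 hl2 hl3 hl4 hach hsν (M := 0) (by omega)
          (Or.inl rfl) (Or.inl hv)
      exact ⟨t, ht, i1, i2, i3, i4, Or.inl (by simp [qnu, hqν])⟩
    · obtain ⟨t, ht, s, hs0, hsν, hv⟩ := scalarT (-((m - 2) / 4))
      obtain ⟨⟨i1, i2, i3, i4⟩, hq0, hqν⟩ :=
        S17.assemble hcomp h2 hn2 ha0 hva hb0 haniso' (Or.inl hvb0) p hp0 hpν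
          u (σ t * u * t) hs0 hl1 hl2 hl3 hl4 hach hsν (M := 2) (by omega)
          (Or.inr (Or.inr ⟨rfl, hvb0⟩)) (Or.inl hv)
      refine ⟨t, ht, i1, i2, i3, i4, Or.inr ?_⟩
      rw [hj1]
      simp [qnu, hqν]
  · -- ν b = 1, j = 2
    have hj2 : j = 2 := by
      rcases hj with ⟨h, _⟩ | ⟨_, h⟩
      · omega
      · exact h
    have h03 : m % 4 = 0 ∨ m % 4 = 1 ∨ m % 4 = 2 ∨ m % 4 = 3 := by omega
    rcases h03 with h4 | h4 | h4 | h4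
    · obtain ⟨t, ht, s, hs0, hsν, hv⟩ := scalarT (-(m / 4))
      obtain ⟨⟨i1, i2, i3, i4⟩, hq0, hqν⟩ :=
        S17.assemble hcomp h2 hn2 ha0 hva hb0 haniso' (Or.inr hvb1) p hp0 hpν
          u (σ t * u * t) hs0 hl1 hl2 hl3 hl4 hach hsν (M := 0) (by omega)
          (Or.inl rfl) (Or.inl hv)
      exact ⟨t, ht, i1, i2, i3, i4, Or.inl (by simp [qnu, hqν])⟩
    · obtain ⟨t, ht, s, hs0, hsν, hv⟩ := scalarT (-((m - 1) / 4))
      obtain ⟨⟨i1, i2, i3, i4⟩, hq0, hqν⟩ :=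
        S17.assemble hcomp h2 hn2 ha0 hva hb0 haniso' (Or.inr hvb1) p hp0 hpν
          u (σ t * u * t) hs0 hl1 hl2 hl3 hl4 hach hsν (M := 1) (by omega)
          (Or.inr (Or.inl ⟨rfl, hvb1⟩)) (Or.inl hv)
      refine ⟨t, ht, i1, i2, i3, i4, Or.inr ?_⟩
      rw [hj2]
      simp [qnu, hqν]
    · obtain ⟨t, ht, s, hs0, hsν, hv⟩ := twistT (-((m + 2) / 4))
      obtain ⟨⟨i1, i2, i3, i4⟩, hq0, hqν⟩ :=
        S17.assemble hcomp h2 hn2 ha0 hva hb0 haniso' (Or.inr hvb1) p hp0 hpν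
          u (σ t * u * t) hs0 hl1 hl2 hl3 hl4 hach hsν (M := 0) (by omega)
          (Or.inl rfl) (Or.inr hv)
      exact ⟨t, ht, i1, i2, i3, i4, Or.inl (by simp [qnu, hqν])⟩
    · obtain ⟨t, ht, s, hs0, hsν, hv⟩ := twistT (-((m + 1) / 4))
      obtain ⟨⟨i1, i2, i3, i4⟩, hq0, hqν⟩ :=
        S17.assemble hcomp h2 hn2 ha0 hva hb0 haniso' (Or.inr hvb1) p hp0 hpν
          u (σ t * u * t) hs0 hl1 hl2 hl3 hl4 hach hsν (M := 1) (by omega)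
          (Or.inr (Or.inl ⟨rfl, hvb1⟩)) (Or.inr hv)
      refine ⟨t, ht, i1, i2, i3, i4, Or.inr ?_⟩
      rw [hj2]
      simp [qnu, hqν]
end
end

section
/- Suppose D = ℍ[K,a,π] with a ∈ O_K^× is a division ring. Then every nonzero element u ∈ D with τ_y(u) = -u satisfies ν_K(Nrd(u)) odd, i.e. ν_D(u) ∈ 1/2 + ℤ. In particular no (-1)-symmetric element of (D, τ_y) is a unit of O_D, so every skew-hermitian form over (D, τ_y) is ramified. -/
noncomputable section

/-- every nonzero `(-1)`-symmetric element of `(ℍ[K,a,ϖ], τ_y)` has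
`ν_K(Nrd u)` odd, i.e. `ν_D(u) ∈ 1/2 + ℤ`; in particular it is not a unit of `O_D`, so every
skew-hermitian form over `(D, τ_y)` is ramified. -/
theorem stmt_18 (K : Type) [Field K] (V : DVal K)
    -- K is complete with residue field of characteristic ≠ 2
    (hcomp : V.IsComplete) (hchar : V.ResCharNeTwo)
    -- D = ℍ[K,a,ϖ] with a ∈ O_K^×, ϖ a uniformizer, D a division ring
    (a ϖ : K) (ha0 : a ≠ 0) (hva : V.ν a = 0) (hϖ0 : ϖ ≠ 0) (hvϖ : V.ν ϖ = 1)
    (haniso : QAniso a ϖ)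
    -- σ = τ_y (μ = λ⁻¹)
    (mu : QuaternionAlgebra K a 0 ϖ)
    (hmu : (⟨0, 0, 1, 0⟩ : QuaternionAlgebra K a 0 ϖ) * mu = 1) (hmu' : mu * (⟨0, 0, 1, 0⟩ : QuaternionAlgebra K a 0 ϖ) = 1)
    (σ : QuaternionAlgebra K a 0 ϖ → QuaternionAlgebra K a 0 ϖ)
    (hσ : ∀ u, σ u = (⟨0, 0, 1, 0⟩ : QuaternionAlgebra K a 0 ϖ) * qtau u * mu)
 :
    ∀ u : QuaternionAlgebra K a 0 ϖ, u ≠ 0 → σ u = -u →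
      Odd (V.ν (qnrd a ϖ u)) ∧
        (∃ n : ℤ, qnu V a ϖ u = (n : ℚ) + 1 / 2) ∧
        qnu V a ϖ u ≠ 0 := by
  intro u hu0 hσu
  rw [hσ] at hσu
  -- multiply by j on the right
  have h2 : (⟨0, 0, 1, 0⟩ : QuaternionAlgebra K a 0 ϖ) * qtau u * (mu * ⟨0, 0, 1, 0⟩) =
      (-u) * ⟨0, 0, 1, 0⟩ := by
    rw [← mul_assoc, hσu]
  rw [hmu', mul_one] at h2
  have two_ne : (2 : K) ≠ 0 := hchar.1
  have hre : u.re = 0 := by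
    have := congrArg QuaternionAlgebra.imJ h2
    simp [qtau, QuaternionAlgebra.imJ_mul] at this
    have h4 : (2 : K) * u.re = 0 := by linear_combination this
    rcases mul_eq_zero.1 h4 with h | h
    · exact absurd h two_ne
    · exact h
  have himI : u.imI = 0 := by
    have := congrArg QuaternionAlgebra.imK h2
    simp [qtau, QuaternionAlgebra.imK_mul] at this
    have h4 : (2 : K) * u.imI = 0 := by linear_combination this
    rcases mul_eq_zero.1 h4 with h | h
    · exact absurd h two_ne
    · exact h
  have himK : u.imK = 0 := by
    have := congrArg QuaternionAlgebra.imI h2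
    simp [qtau, QuaternionAlgebra.imI_mul] at this
    have h4 : (2 : K) * (ϖ * u.imK) = 0 := by linear_combination this
    rcases mul_eq_zero.1 h4 with h | h
    · exact absurd h two_ne
    · rcases mul_eq_zero.1 h with h | h
      · exact absurd h hϖ0
      · exact h
  have hβ : u.imJ ≠ 0 := by
    intro h
    apply hu0
    ext <;> simp [hre, himI, himK, h]
  -- value of the reduced norm
  have hnrd : qnrd a ϖ u = -(ϖ * (u.imJ * u.imJ)) := by
    simp only [qnrd, hre, himI, himK]; ring
  have hneg1 : V.ν (-1 : K) = 0 := by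
    have := V.ν_mul (-1 : K) (-1) (by norm_num) (by norm_num)
    rw [neg_mul_neg, one_mul, V.ν_one] at this
    omega
  have hprod0 : ϖ * (u.imJ * u.imJ) ≠ 0 := by
    exact mul_ne_zero hϖ0 (mul_ne_zero hβ hβ)
  have hval : V.ν (qnrd a ϖ u) = 2 * V.ν u.imJ + 1 := by
    rw [hnrd]
    have h1 : V.ν (-(ϖ * (u.imJ * u.imJ))) = V.ν (-1 : K) + V.ν (ϖ * (u.imJ * u.imJ)) := by
      rw [← V.ν_mul _ _ (by norm_num) hprod0, neg_one_mul]
    rw [h1, hneg1, V.ν_mul _ _ hϖ0 (mul_ne_zero hβ hβ), V.ν_mul _ _ hβ hβ, hvϖ]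
    ring
  refine ⟨⟨V.ν u.imJ, by rw [hval]⟩, ⟨V.ν u.imJ, ?_⟩, ?_⟩
  · rw [qnu, hval]; push_cast; ring
  · rw [qnu, hval]
    intro h
    rw [div_eq_zero_iff] at h
    rcases h with h | h
    · have h' : (2 * V.ν u.imJ + 1 : ℤ) = 0 := by exact_mod_cast h
      omega
    · norm_num at h
end
end

section
/- Let σ = τ_λ with λ ∈ {1, x, y}, let ε ∈ {1,-1}, and let u ∈ D be a nonzero ε-symmetric element (σ(u) = ε·u). Then there exists an invertible t ∈ D such that v := σ(t)·u·t satisfies exactly one of: (i) v = δ + αx with δ, α ∈ O_K and ν_D(v) = 0, or (ii) v = βy + γz with β, γ ∈ O_K and ν_D(v) = 1/2. That is, every one-dimensional ε-hermitian form over (D, σ) is isometric either to a form with unit diagonal entry in the O_K-span of {1, x}, or to a form with diagonal entry of value 1/2 in the O_K-span of {y, z}. -/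
noncomputable section

namespace Stmt19Aux

variable {K : Type} [Field K]

theorem nu_neg (V : DVal K) {x : K} (hx : x ≠ 0) : V.ν (-x) = V.ν x := by
  have h1 : V.ν ((-1 : K) * (-1)) = V.ν (-1) + V.ν (-1) :=
    V.ν_mul _ _ (by norm_num) (by norm_num)
  rw [show ((-1 : K) * -1) = 1 by ring, V.ν_one] at h1
  have h2 : V.ν ((-1 : K) * x) = V.ν (-1) + V.ν x := V.ν_mul _ _ (by norm_num) hx
  rw [show ((-1 : K) * x) = -x by ring] at h2
  omega

theorem nu_inv (V : DVal K) {x : K} (hx : x ≠ 0) : V.ν x⁻¹ = - V.ν x := by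
  have h : V.ν (x⁻¹ * x) = V.ν x⁻¹ + V.ν x := V.ν_mul _ _ (inv_ne_zero hx) hx
  rw [inv_mul_cancel₀ hx, V.ν_one] at h
  omega

theorem nu_div (V : DVal K) {x y : K} (hx : x ≠ 0) (hy : y ≠ 0) :
    V.ν (x / y) = V.ν x - V.ν y := by
  rw [div_eq_mul_inv, V.ν_mul _ _ hx (inv_ne_zero hy), nu_inv V hy]; ring

theorem nu_add_left (V : DVal K) {x y : K} (hx : x ≠ 0) (hy : y ≠ 0)
    (h : V.ν x < V.ν y) : x + y ≠ 0 ∧ V.ν (x + y) = V.ν x := by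
  have hne : x + y ≠ 0 := by
    intro h0
    have hxy : x = -y := by linear_combination h0
    rw [hxy, nu_neg V hy] at h; omega
  have h1 : min (V.ν x) (V.ν y) ≤ V.ν (x + y) := V.ν_add _ _ hx hy hne
  have h2 : min (V.ν (x + y)) (V.ν (-y)) ≤ V.ν x := by
    have h3 := V.ν_add (x + y) (-y) hne (neg_ne_zero.2 hy)
      (by rw [show x + y + -y = x by ring]; exact hx)
    rw [show x + y + -y = x by ring] at h3; exact h3
  rw [nu_neg V hy] at h2
  exact ⟨hne, by omega⟩

theorem ge_add (V : DVal K) {x y : K} {M : ℤ} (hx : x = 0 ∨ M ≤ V.ν x)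
    (hy : y = 0 ∨ M ≤ V.ν y) : x + y = 0 ∨ M ≤ V.ν (x + y) := by
  by_cases hx0 : x = 0
  · subst hx0; simpa using hy
  by_cases hy0 : y = 0
  · subst hy0; simpa using hx
  by_cases h0 : x + y = 0
  · exact Or.inl h0
  · right
    have := V.ν_add x y hx0 hy0 h0
    have hx' := hx.resolve_left hx0
    have hy' := hy.resolve_left hy0
    omega

theorem ge_mul (V : DVal K) {x y : K} {M N : ℤ} (hx : x = 0 ∨ M ≤ V.ν x)
    (hy : y = 0 ∨ N ≤ V.ν y) : x * y = 0 ∨ M + N ≤ V.ν (x * y) := by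
  by_cases hx0 : x = 0
  · subst hx0; left; ring
  by_cases hy0 : y = 0
  · subst hy0; left; ring
  right
  rw [V.ν_mul _ _ hx0 hy0]
  have hx' := hx.resolve_left hx0
  have hy' := hy.resolve_left hy0
  omega

theorem ge_neg (V : DVal K) {x : K} {M : ℤ} (hx : x = 0 ∨ M ≤ V.ν x) :
    -x = 0 ∨ M ≤ V.ν (-x) := by
  by_cases hx0 : x = 0
  · subst hx0; left; ring
  · right; rw [nu_neg V hx0]; exact hx.resolve_left hx0

theorem nu_pow (V : DVal K) {x : K} (hx : x ≠ 0) (n : ℕ) :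
    V.ν (x ^ n) = n * V.ν x := by
  induction n with
  | zero => simpa using V.ν_one
  | succ n ih =>
    rw [pow_succ, V.ν_mul _ _ (pow_ne_zero n hx) hx, ih]; push_cast; ring

theorem nu_zpow (V : DVal K) {x : K} (hx : x ≠ 0) (n : ℤ) :
    V.ν (x ^ n) = n * V.ν x := by
  obtain ⟨m, rfl | rfl⟩ := Int.eq_nat_or_neg n
  · rw [zpow_natCast, nu_pow V hx]
  · rw [zpow_neg, zpow_natCast, nu_inv V (pow_ne_zero m hx), nu_pow V hx]; push_cast; ring


theorem hensel (V : DVal K) (hcomp : V.IsComplete) (h2 : V.ResCharNeTwo)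
    {η : K} (hη : η = 0 ∨ 1 ≤ V.ν η) :
    ∃ s : K, s ≠ 0 ∧ V.ν s = 0 ∧ s ^ 2 = 1 + η := by
  by_cases hη0 : η = 0
  · exact ⟨1, one_ne_zero, V.ν_one, by rw [hη0]; ring⟩
  have hη1 : 1 ≤ V.ν η := hη.resolve_left hη0
  obtain ⟨h2ne, h2ν⟩ := h2
  set u : K := 1 + η with hu
  have hu0 : u ≠ 0 ∧ V.ν u = 0 := by
    have h := nu_add_left V one_ne_zero hη0 (by rw [V.ν_one]; omega)
    exact ⟨h.1, by rw [h.2, V.ν_one]⟩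
  let f : ℕ → K := fun n => Nat.rec (1 : K) (fun _ x => (x + u / x) / 2) n
  have hf0 : f 0 = 1 := rfl
  have hfs : ∀ n, f (n + 1) = (f n + u / f n) / 2 := fun n => rfl
  have hinv : ∀ n, f n ≠ 0 ∧ V.ν (f n) = 0 ∧
      (f n ^ 2 - u = 0 ∨ (n : ℤ) + 1 ≤ V.ν (f n ^ 2 - u)) := by
    intro n; induction n with
    | zero =>
      refine ⟨one_ne_zero, V.ν_one, ?_⟩
      rw [hf0, show (1 : K) ^ 2 - u = -η by rw [hu]; ring]
      right; rw [nu_neg V hη0]; omega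
    | succ n ih =>
      obtain ⟨hx0, hxν, hxd⟩ := ih
      set x := f n with hxdef
      have h2x : (2 : K) * x ≠ 0 := mul_ne_zero h2ne hx0
      have key : f (n + 1) ^ 2 - u = (x ^ 2 - u) ^ 2 / (2 * x) ^ 2 := by
        rw [hfs n, ← hxdef]; field_simp; ring
      have keyx : f (n + 1) = x + (u - x ^ 2) / (2 * x) := by
        rw [hfs n, ← hxdef]; field_simp; ring
      by_cases hd0 : x ^ 2 - u = 0
      · have hfx : f (n + 1) = x := by
          rw [keyx, show u - x ^ 2 = 0 by linear_combination -hd0]; simp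
        exact ⟨by rw [hfx]; exact hx0, by rw [hfx]; exact hxν,
          Or.inl (by rw [hfx]; exact hd0)⟩
      · have hxd' : (n : ℤ) + 1 ≤ V.ν (x ^ 2 - u) := hxd.resolve_left hd0
        have h2xν : V.ν (2 * x) = 0 := by
          have h := V.ν_mul 2 x h2ne hx0; omega
        have hdν : V.ν (f (n + 1) ^ 2 - u) = 2 * V.ν (x ^ 2 - u) := by
          rw [key, nu_div V (pow_ne_zero 2 hd0) (pow_ne_zero 2 h2x),
            nu_pow V hd0, nu_pow V h2x, h2xν]; push_cast; ring
        have he0 : (u - x ^ 2) / (2 * x) ≠ 0 :=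
          div_ne_zero (fun h => hd0 (by linear_combination -h)) h2x
        have heν : V.ν ((u - x ^ 2) / (2 * x)) = V.ν (x ^ 2 - u) := by
          rw [show u - x ^ 2 = -(x ^ 2 - u) by ring, nu_div V (neg_ne_zero.2 hd0) h2x,
            nu_neg V hd0, h2xν]; omega
        have hadd := nu_add_left V hx0 he0 (by rw [hxν, heν]; omega)
        exact ⟨by rw [keyx]; exact hadd.1, by rw [keyx, hadd.2, hxν],
          Or.inr (by rw [hdν]; push_cast; omega)⟩
  have hstepall : ∀ n : ℕ, f (n + 1) - f n = 0 ∨ (n : ℤ) + 1 ≤ V.ν (f (n + 1) - f n) := by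
    intro n
    obtain ⟨hx0, hxν, hxd⟩ := hinv n
    set x := f n with hxdef
    have h2x : (2 : K) * x ≠ 0 := mul_ne_zero h2ne hx0
    have keyx : f (n + 1) - x = (u - x ^ 2) / (2 * x) := by
      rw [hfs n, ← hxdef]; field_simp; ring
    by_cases hd0 : x ^ 2 - u = 0
    · left; rw [keyx, show u - x ^ 2 = 0 by linear_combination -hd0]; simp
    · right
      have hxd' : (n : ℤ) + 1 ≤ V.ν (x ^ 2 - u) := hxd.resolve_left hd0
      have h2xν : V.ν (2 * x) = 0 := by
        rw [V.ν_mul _ _ h2ne hx0, h2ν, hxν] <;> try omega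
      have he0 : u - x ^ 2 ≠ 0 := fun h => hd0 (by linear_combination -h)
      rw [keyx, nu_div V he0 h2x, show u - x ^ 2 = -(x ^ 2 - u) by ring,
        nu_neg V hd0, h2xν]
      omega
  have hcau : ∀ n m : ℕ, n ≤ m → (f m - f n = 0 ∨ (n : ℤ) + 1 ≤ V.ν (f m - f n)) := by
    intro n m hnm
    induction m, hnm using Nat.le_induction with
    | base => left; ring
    | succ m hnm ih =>
      have hstep := hstepall m
      have hstep' : f (m + 1) - f m = 0 ∨ (n : ℤ) + 1 ≤ V.ν (f (m + 1) - f m) := by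
        rcases hstep with h | h
        · exact Or.inl h
        · right; have : (n : ℤ) ≤ (m : ℤ) := by exact_mod_cast hnm
          omega
      have := ge_add V hstep' ih
      rwa [show f (m + 1) - f m + (f m - f n) = f (m + 1) - f n by ring] at this
  have hcauchy : ∀ M : ℤ, ∃ N : ℕ, ∀ m n : ℕ, N ≤ m → N ≤ n →
      f m - f n = 0 ∨ M ≤ V.ν (f m - f n) := by
    intro M
    refine ⟨M.toNat, fun m n hm hn => ?_⟩
    have hM1 : M ≤ (M.toNat : ℤ) := Int.self_le_toNat M
    rcases le_total n m with h | h
    · rcases hcau n m h with h0 | h0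
      · exact Or.inl h0
      · right; have : (M.toNat : ℤ) ≤ (n : ℤ) := by exact_mod_cast hn
        omega
    · by_cases hz : f n - f m = 0
      · left; rw [show f m - f n = -(f n - f m) by ring, hz]; ring
      · rcases hcau m n h with h0 | h0
        · exact absurd h0 hz
        · right
          rw [show f m - f n = -(f n - f m) by ring, nu_neg V hz]
          have hmn : (M.toNat : ℤ) ≤ (m : ℤ) := by exact_mod_cast hm
          omega
  obtain ⟨L, hL⟩ := hcomp f hcauchy
  obtain ⟨N₁, hN₁⟩ := hL 1
  have hLprop : L ≠ 0 ∧ V.ν L = 0 := by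
    obtain ⟨hx0, hxν, -⟩ := hinv N₁
    by_cases hz : f N₁ - L = 0
    · have hLe : L = f N₁ := by linear_combination -hz
      rw [hLe]; exact ⟨hx0, hxν⟩
    · have h1 : 1 ≤ V.ν (f N₁ - L) := (hN₁ N₁ le_rfl).resolve_left hz
      have hadd := nu_add_left V hx0 (neg_ne_zero.2 hz) (by rw [nu_neg V hz, hxν]; omega)
      have hLe : f N₁ + -(f N₁ - L) = L := by ring
      constructor
      · rw [← hLe]; exact hadd.1
      · rw [← hLe, hadd.2, hxν]
  have hLu : L ^ 2 = u := by
    by_contra hne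
    have hd0 : L ^ 2 - u ≠ 0 := sub_ne_zero.2 hne
    set M₀ := V.ν (L ^ 2 - u) with hM₀
    obtain ⟨N₂, hN₂⟩ := hL (M₀ + 1)
    set n := max N₂ (M₀ + 1).toNat with hn
    obtain ⟨hx0, hxν, hxd⟩ := hinv n
    have p1 : f n ^ 2 - u = 0 ∨ M₀ + 1 ≤ V.ν (f n ^ 2 - u) := by
      rcases hxd with h | h
      · exact Or.inl h
      · right
        have h1 : ((M₀ + 1).toNat : ℤ) ≤ (n : ℤ) := by
          exact_mod_cast le_max_right N₂ (M₀ + 1).toNat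
        have h2 : M₀ + 1 ≤ ((M₀ + 1).toNat : ℤ) := Int.self_le_toNat _
        omega
    have p2 : f n - L = 0 ∨ M₀ + 1 ≤ V.ν (f n - L) := hN₂ n (le_max_left _ _)
    have p3 : f n + L = 0 ∨ (0 : ℤ) ≤ V.ν (f n + L) := by
      by_cases h : f n + L = 0
      · exact Or.inl h
      · right
        have := V.ν_add _ _ hx0 hLprop.1 h
        rw [hxν, hLprop.2] at this; simpa using this
    have p4 := ge_mul V p2 p3
    rw [add_zero] at p4
    have p6 := ge_add V p1 (ge_neg V p4)
    rw [show f n ^ 2 - u + -((f n - L) * (f n + L)) = L ^ 2 - u by ring] at p6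
    rcases p6 with h | h
    · exact hd0 h
    · omega
  exact ⟨L, hLprop.1, hLprop.2, by rw [hLu, hu]⟩


/-- `m` is the minimum of the valuations of `p` and `q` (not both zero). -/
def Dom (V : DVal K) (m : ℤ) (p q : K) : Prop :=
  (p = 0 ∨ m ≤ V.ν p) ∧ (q = 0 ∨ m ≤ V.ν q) ∧
    ((p ≠ 0 ∧ V.ν p = m) ∨ (q ≠ 0 ∧ V.ν q = m))

theorem dom_exists (V : DVal K) {p q : K} (h : ¬(p = 0 ∧ q = 0)) :
    ∃ m, Dom V m p q := by
  by_cases hp : p = 0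
  · have hq : q ≠ 0 := fun h' => h ⟨hp, h'⟩
    exact ⟨V.ν q, Or.inl hp, Or.inr le_rfl, Or.inr ⟨hq, rfl⟩⟩
  by_cases hq : q = 0
  · exact ⟨V.ν p, Or.inr le_rfl, Or.inl hq, Or.inl ⟨hp, rfl⟩⟩
  · refine ⟨min (V.ν p) (V.ν q), Or.inr (min_le_left _ _), Or.inr (min_le_right _ _), ?_⟩
    rcases le_total (V.ν p) (V.ν q) with h' | h'
    · exact Or.inl ⟨hp, (min_eq_left h').symm⟩
    · exact Or.inr ⟨hq, (min_eq_right h').symm⟩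

theorem dom_scale (V : DVal K) {m k : ℤ} {p q e₁ e₂ : K} (h : Dom V m p q)
    (he₁ : e₁ ≠ 0) (he₂ : e₂ ≠ 0) (hv₁ : V.ν e₁ = k) (hv₂ : V.ν e₂ = k) :
    Dom V (k + m) (e₁ * p) (e₂ * q) := by
  obtain ⟨h1, h2, h3⟩ := h
  refine ⟨?_, ?_, ?_⟩
  · rcases h1 with rfl | h1
    · left; ring
    · by_cases hp : p = 0
      · left; rw [hp]; ring
      · right; rw [V.ν_mul _ _ he₁ hp, hv₁]; omega
  · rcases h2 with rfl | h2
    · left; ring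
    · by_cases hq : q = 0
      · left; rw [hq]; ring
      · right; rw [V.ν_mul _ _ he₂ hq, hv₂]; omega
  · rcases h3 with ⟨hp, hpm⟩ | ⟨hq, hqm⟩
    · exact Or.inl ⟨mul_ne_zero he₁ hp, by rw [V.ν_mul _ _ he₁ hp, hv₁, hpm]⟩
    · exact Or.inr ⟨mul_ne_zero he₂ hq, by rw [V.ν_mul _ _ he₂ hq, hv₂, hqm]⟩

theorem dom_unit_l (V : DVal K) {p q : K} (hp : p ≠ 0) (hν : V.ν p = 0)
    (hq : q = 0 ∨ 0 ≤ V.ν q) : Dom V 0 p q :=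
  ⟨Or.inr hν.ge, hq, Or.inl ⟨hp, hν⟩⟩

theorem dom_unit_r (V : DVal K) {p q : K} (hq : q ≠ 0) (hν : V.ν q = 0)
    (hp : p = 0 ∨ 0 ≤ V.ν p) : Dom V 0 p q :=
  ⟨hp, Or.inr hν.ge, Or.inr ⟨hq, hν⟩⟩

theorem dom_swap_unit (V : DVal K) {m : ℤ} {p q a : K} (ha : a ≠ 0) (hva : V.ν a = 0)
    (h : Dom V m p q) : Dom V m (a * q) p := by
  obtain ⟨h1, h2, h3⟩ := h
  have key : ∀ x : K, x ≠ 0 → V.ν (a * x) = V.ν x := fun x hx => by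
    rw [V.ν_mul _ _ ha hx, hva]; omega
  refine ⟨?_, h1, ?_⟩
  · rcases h2 with rfl | h2
    · left; ring
    · by_cases hq : q = 0
      · left; rw [hq]; ring
      · right; rw [key q hq]; omega
  · rcases h3 with ⟨hp, hpm⟩ | ⟨hq, hqm⟩
    · exact Or.inr ⟨hp, hpm⟩
    · exact Or.inl ⟨mul_ne_zero ha hq, by rw [key q hq, hqm]⟩

/-- `1 - a r²` is a unit of `O_K` when `r` is integral and `a` is a nonsquare unit. -/
theorem unit_fact (V : DVal K) (hcomp : V.IsComplete) (h2 : V.ResCharNeTwo)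
    {a ϖ : K} (ha0 : a ≠ 0) (hva : V.ν a = 0) (haniso : QAniso a ϖ)
    {r : K} (hr : r = 0 ∨ 0 ≤ V.ν r) :
    1 - a * r ^ 2 ≠ 0 ∧ V.ν (1 - a * r ^ 2) = 0 := by
  by_cases hr0 : r = 0
  · subst hr0
    constructor
    · norm_num
    · rw [show 1 - a * (0:K) ^ 2 = 1 by ring, V.ν_one]
  have hr' : 0 ≤ V.ν r := hr.resolve_left hr0
  have har : a * r ^ 2 ≠ 0 := mul_ne_zero ha0 (pow_ne_zero 2 hr0)
  have harν : V.ν (a * r ^ 2) = 2 * V.ν r := by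
    rw [V.ν_mul _ _ ha0 (pow_ne_zero 2 hr0), nu_pow V hr0, hva]; push_cast; ring
  by_cases hr1 : 1 ≤ V.ν r
  · have hadd := nu_add_left V one_ne_zero (neg_ne_zero.2 har)
      (by rw [nu_neg V har, V.ν_one, harν]; omega)
    rw [show (1:K) + -(a * r ^ 2) = 1 - a * r ^ 2 by ring] at hadd
    exact ⟨hadd.1, by rw [hadd.2, V.ν_one]⟩
  · -- ν r = 0
    have hrν : V.ν r = 0 := by omega
    have key : ¬(1 - a * r ^ 2 = 0 ∨ 1 ≤ V.ν (1 - a * r ^ 2)) := by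
      intro hbad
      have hη : a * r ^ 2 - 1 = 0 ∨ 1 ≤ V.ν (a * r ^ 2 - 1) := by
        by_cases hz : 1 - a * r ^ 2 = 0
        · exact Or.inl (by linear_combination -hz)
        · right
          rw [show a * r ^ 2 - 1 = -(1 - a * r ^ 2) by ring, nu_neg V hz]
          exact hbad.resolve_left hz
      obtain ⟨s, hs0, hsν, hs2⟩ := hensel V hcomp h2 hη
      have hsq : s ^ 2 = a * r ^ 2 := by rw [hs2]; ring
      have hcon := haniso (s / r) 1 0 0 (by field_simp; linear_combination hsq)
      exact one_ne_zero hcon.2.1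
    have hne : 1 - a * r ^ 2 ≠ 0 := fun h => key (Or.inl h)
    have hge : 0 ≤ V.ν (1 - a * r ^ 2) := by
      have h3 := V.ν_add 1 (-(a * r ^ 2)) one_ne_zero (neg_ne_zero.2 har)
        (by rw [show (1:K) + -(a * r ^ 2) = 1 - a * r ^ 2 by ring]; exact hne)
      rw [show (1:K) + -(a * r ^ 2) = 1 - a * r ^ 2 by ring, V.ν_one,
        nu_neg V har, harν] at h3
      omega
    have hlt : ¬ 1 ≤ V.ν (1 - a * r ^ 2) := fun h => key (Or.inr h)
    exact ⟨hne, by omega⟩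

/-- Value of the anisotropic binary form `p² - a q²`. -/
theorem binA (V : DVal K) (hcomp : V.IsComplete) (h2 : V.ResCharNeTwo)
    {a ϖ : K} (ha0 : a ≠ 0) (hva : V.ν a = 0) (haniso : QAniso a ϖ)
    {p q : K} (hp : p ≠ 0) (hq : q = 0 ∨ V.ν p ≤ V.ν q) :
    p ^ 2 - a * q ^ 2 ≠ 0 ∧ V.ν (p ^ 2 - a * q ^ 2) = 2 * V.ν p := by
  have hr : q / p = 0 ∨ 0 ≤ V.ν (q / p) := by
    rcases hq with rfl | hq
    · left; simp
    · by_cases hq0 : q = 0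
      · left; rw [hq0]; simp
      · right; rw [nu_div V hq0 hp]; omega
  obtain ⟨h1, h2'⟩ := unit_fact V hcomp h2 ha0 hva haniso hr
  have hfac : p ^ 2 - a * q ^ 2 = p ^ 2 * (1 - a * (q / p) ^ 2) := by
    field_simp
  constructor
  · rw [hfac]; exact mul_ne_zero (pow_ne_zero 2 hp) h1
  · rw [hfac, V.ν_mul _ _ (pow_ne_zero 2 hp) h1, nu_pow V hp, h2']; push_cast; ring

theorem binDom (V : DVal K) (hcomp : V.IsComplete) (h2 : V.ResCharNeTwo)
    {a ϖ : K} (ha0 : a ≠ 0) (hva : V.ν a = 0) (haniso : QAniso a ϖ)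
    {p q : K} {m : ℤ} (h : Dom V m p q) :
    p ^ 2 - a * q ^ 2 ≠ 0 ∧ V.ν (p ^ 2 - a * q ^ 2) = 2 * m := by
  obtain ⟨h1, h2'', h3⟩ := h
  rcases h3 with ⟨hp0, hpm⟩ | ⟨hq0, hqm⟩
  · have := binA V hcomp h2 ha0 hva haniso hp0
      (by rcases h2'' with h' | h'; exact Or.inl h'; right; omega)
    rw [hpm] at this; exact this
  · by_cases hp0 : p = 0
    · subst hp0
      have hne : (0:K) ^ 2 - a * q ^ 2 ≠ 0 := by
        intro h'
        exact (mul_ne_zero ha0 (pow_ne_zero 2 hq0)) (by linear_combination -h')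
      refine ⟨hne, ?_⟩
      rw [show (0:K) ^ 2 - a * q ^ 2 = -(a * q ^ 2) by ring,
        nu_neg V (mul_ne_zero ha0 (pow_ne_zero 2 hq0)),
        V.ν_mul _ _ ha0 (pow_ne_zero 2 hq0), nu_pow V hq0, hva, hqm]
      push_cast; ring
    · have hp1 : m ≤ V.ν p := h1.resolve_left hp0
      rcases eq_or_lt_of_le hp1 with heq | hlt
      · have := binA V hcomp h2 ha0 hva haniso (q := q) hp0 (Or.inr (by omega))
        rw [← heq] at this; exact this
      · -- m = ν q < ν p
        have hr : p / q ≠ 0 := div_ne_zero hp0 hq0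
        have hrν : 1 ≤ V.ν (p / q) := by rw [nu_div V hp0 hq0]; omega
        have hadd := nu_add_left V ha0 (neg_ne_zero.2 (pow_ne_zero 2 hr))
          (by rw [nu_neg V (pow_ne_zero 2 hr), nu_pow V hr, hva]; push_cast; omega)
        rw [show a + -((p / q) ^ 2) = -((p / q) ^ 2 - a) by ring] at hadd
        have hfne : (p / q) ^ 2 - a ≠ 0 := fun h' => hadd.1 (by rw [h']; ring)
        have hfν : V.ν ((p / q) ^ 2 - a) = 0 := by
          rw [← nu_neg V hfne, hadd.2, hva]
        have hfac : p ^ 2 - a * q ^ 2 = q ^ 2 * ((p / q) ^ 2 - a) := by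
          field_simp
        constructor
        · rw [hfac]; exact mul_ne_zero (pow_ne_zero 2 hq0) hfne
        · rw [hfac, V.ν_mul _ _ (pow_ne_zero 2 hq0) hfne, nu_pow V hq0, hfν, hqm]
          push_cast; ring


section Quat

open QuaternionAlgebra

variable {a ϖ : K}

theorem qtau_mul (u v : QuaternionAlgebra K a 0 ϖ) :
    qtau (u * v) = qtau v * qtau u := by
  ext <;> simp [qtau] <;> ring

theorem qtau_one : qtau (1 : QuaternionAlgebra K a 0 ϖ) = 1 := by
  ext <;> simp [qtau]

theorem qtau_mul_self (u : QuaternionAlgebra K a 0 ϖ) :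
    qtau u * u = (⟨qnrd a ϖ u, 0, 0, 0⟩ : QuaternionAlgebra K a 0 ϖ) := by
  ext <;> simp [qtau, qnrd] <;> ring

theorem mul_qtau_self (u : QuaternionAlgebra K a 0 ϖ) :
    u * qtau u = (⟨qnrd a ϖ u, 0, 0, 0⟩ : QuaternionAlgebra K a 0 ϖ) := by
  ext <;> simp [qtau, qnrd] <;> ring

theorem qnrd_mul (u v : QuaternionAlgebra K a 0 ϖ) :
    qnrd a ϖ (u * v) = qnrd a ϖ u * qnrd a ϖ v := by
  simp [qnrd]; ring

theorem qnrd_ne (haniso : QAniso a ϖ) {u : QuaternionAlgebra K a 0 ϖ} (hu : u ≠ 0) :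
    qnrd a ϖ u ≠ 0 := by
  intro h
  obtain ⟨h1, h2, h3, h4⟩ := haniso u.re u.imI u.imJ u.imK h
  exact hu (QuaternionAlgebra.ext h1 h2 h3 h4)

theorem qmul_ne (haniso : QAniso a ϖ) {u v : QuaternionAlgebra K a 0 ϖ}
    (hu : u ≠ 0) (hv : v ≠ 0) : u * v ≠ 0 := by
  intro h
  have h1 : qnrd a ϖ (u * v) = qnrd a ϖ u * qnrd a ϖ v := qnrd_mul u v
  rw [h] at h1
  have h0 : qnrd a ϖ (0 : QuaternionAlgebra K a 0 ϖ) = 0 := by simp [qnrd]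
  exact mul_ne_zero (qnrd_ne haniso hu) (qnrd_ne haniso hv) (h0 ▸ h1.symm)

theorem isUnit_of_ne (haniso : QAniso a ϖ) {u : QuaternionAlgebra K a 0 ϖ}
    (hu : u ≠ 0) : IsUnit u := by
  have hn := qnrd_ne haniso hu
  have h1 : u * ((qnrd a ϖ u)⁻¹ • qtau u) = 1 := by
    rw [mul_smul_comm, mul_qtau_self]
    ext <;> simp <;> field_simp
  have h2 : ((qnrd a ϖ u)⁻¹ • qtau u) * u = 1 := by
    rw [smul_mul_assoc, qtau_mul_self]
    ext <;> simp <;> field_simp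
  exact ⟨⟨u, (qnrd a ϖ u)⁻¹ • qtau u, h1, h2⟩, rfl⟩

theorem conj_comp (t₁ t₂ w : QuaternionAlgebra K a 0 ϖ) :
    qtau (t₁ * t₂) * w * (t₁ * t₂) = qtau t₂ * (qtau t₁ * w * t₁) * t₂ := by
  rw [qtau_mul]; simp only [mul_assoc]

theorem conj_core (haniso : QAniso a ϖ) (w w₀ : QuaternionAlgebra K a 0 ϖ)
    (hsq : w * w = w₀ * w₀) :
    ∃ t : QuaternionAlgebra K a 0 ϖ, t ≠ 0 ∧ ∃ c : K, c ≠ 0 ∧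
      qtau t * w * t =
        (⟨c * w₀.re, c * w₀.imI, c * w₀.imJ, c * w₀.imK⟩ : QuaternionAlgebra K a 0 ϖ) := by
  by_cases h : w + w₀ = 0
  · refine ⟨1, one_ne_zero, -1, by norm_num, ?_⟩
    have hw : w = -w₀ := eq_neg_of_add_eq_zero_left h
    rw [qtau_one, one_mul, mul_one, hw]
    ext <;> simp <;> ring
  · refine ⟨w + w₀, h, qnrd a ϖ (w + w₀), qnrd_ne haniso h, ?_⟩
    have hcomm : w * (w + w₀) = (w + w₀) * w₀ := by
      rw [mul_add, add_mul, hsq, add_comm]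
    calc qtau (w + w₀) * w * (w + w₀) = qtau (w + w₀) * (w * (w + w₀)) := by
          rw [mul_assoc]
      _ = qtau (w + w₀) * ((w + w₀) * w₀) := by rw [hcomm]
      _ = (qtau (w + w₀) * (w + w₀)) * w₀ := by rw [mul_assoc]
      _ = _ := by rw [qtau_mul_self]; ext <;> simp <;> ring


theorem mk_ne_zero_of_re {p : K} (hp : p ≠ 0) :
    (⟨p, 0, 0, 0⟩ : QuaternionAlgebra K a 0 ϖ) ≠ 0 :=
  fun h => hp (by simpa using congrArg QuaternionAlgebra.re h)

theorem mk_ne_zero_of_imJ {p : K} (hp : p ≠ 0) :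
    (⟨0, 0, p, 0⟩ : QuaternionAlgebra K a 0 ϖ) ≠ 0 :=
  fun h => hp (by simpa using congrArg QuaternionAlgebra.imJ h)

theorem scaleSc (V : DVal K) (hϖ0 : ϖ ≠ 0) (hvϖ : V.ν ϖ = 1)
    {δ : K} (hδ : δ ≠ 0) (n : ℤ) :
    ∃ t : QuaternionAlgebra K a 0 ϖ, t ≠ 0 ∧ ∃ δ' : K, δ' ≠ 0 ∧ V.ν δ' = n ∧
      qtau t * (⟨δ, 0, 0, 0⟩ : QuaternionAlgebra K a 0 ϖ) * t = ⟨δ', 0, 0, 0⟩ := by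
  rcases Int.even_or_odd (n - V.ν δ) with ⟨j, hj⟩ | ⟨j, hj⟩
  · set c : K := ϖ ^ j with hc
    have hc0 : c ≠ 0 := zpow_ne_zero j hϖ0
    have hcν : V.ν c = j := by rw [hc, nu_zpow V hϖ0, hvϖ]; ring
    refine ⟨⟨c, 0, 0, 0⟩, mk_ne_zero_of_re hc0, c ^ 2 * δ,
      mul_ne_zero (pow_ne_zero 2 hc0) hδ, ?_, by ext <;> simp [qtau] <;> ring⟩
    rw [V.ν_mul _ _ (pow_ne_zero 2 hc0) hδ, nu_pow V hc0, hcν]; push_cast; omega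
  · set c : K := ϖ ^ j with hc
    have hc0 : c ≠ 0 := zpow_ne_zero j hϖ0
    have hcν : V.ν c = j := by rw [hc, nu_zpow V hϖ0, hvϖ]; ring
    have hne : -(ϖ * c ^ 2 * δ) ≠ 0 :=
      neg_ne_zero.2 (mul_ne_zero (mul_ne_zero hϖ0 (pow_ne_zero 2 hc0)) hδ)
    refine ⟨⟨0, 0, c, 0⟩, mk_ne_zero_of_imJ hc0, -(ϖ * c ^ 2 * δ), hne, ?_,
      by ext <;> simp [qtau] <;> ring⟩
    rw [nu_neg V (neg_ne_zero.1 hne),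
      V.ν_mul _ _ (mul_ne_zero hϖ0 (pow_ne_zero 2 hc0)) hδ,
      V.ν_mul _ _ hϖ0 (pow_ne_zero 2 hc0), nu_pow V hc0, hcν, hvϖ]
    push_cast; omega

theorem scaleX (V : DVal K) (hϖ0 : ϖ ≠ 0) (hvϖ : V.ν ϖ = 1)
    {A : K} (hA : A ≠ 0) (n : ℤ) :
    ∃ t : QuaternionAlgebra K a 0 ϖ, t ≠ 0 ∧ ∃ A' : K, A' ≠ 0 ∧ V.ν A' = n ∧
      qtau t * (⟨0, A, 0, 0⟩ : QuaternionAlgebra K a 0 ϖ) * t = ⟨0, A', 0, 0⟩ := by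
  rcases Int.even_or_odd (n - V.ν A) with ⟨j, hj⟩ | ⟨j, hj⟩
  · set c : K := ϖ ^ j with hc
    have hc0 : c ≠ 0 := zpow_ne_zero j hϖ0
    have hcν : V.ν c = j := by rw [hc, nu_zpow V hϖ0, hvϖ]; ring
    refine ⟨⟨c, 0, 0, 0⟩, mk_ne_zero_of_re hc0, c ^ 2 * A,
      mul_ne_zero (pow_ne_zero 2 hc0) hA, ?_, by ext <;> simp [qtau] <;> ring⟩
    rw [V.ν_mul _ _ (pow_ne_zero 2 hc0) hA, nu_pow V hc0, hcν]; push_cast; omega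
  · set c : K := ϖ ^ j with hc
    have hc0 : c ≠ 0 := zpow_ne_zero j hϖ0
    have hcν : V.ν c = j := by rw [hc, nu_zpow V hϖ0, hvϖ]; ring
    have hne : ϖ * c ^ 2 * A ≠ 0 :=
      mul_ne_zero (mul_ne_zero hϖ0 (pow_ne_zero 2 hc0)) hA
    refine ⟨⟨0, 0, c, 0⟩, mk_ne_zero_of_imJ hc0, ϖ * c ^ 2 * A, hne, ?_,
      by ext <;> simp [qtau] <;> ring⟩
    rw [V.ν_mul _ _ (mul_ne_zero hϖ0 (pow_ne_zero 2 hc0)) hA,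
      V.ν_mul _ _ hϖ0 (pow_ne_zero 2 hc0), nu_pow V hc0, hcν, hvϖ]
    push_cast; omega

theorem scaleYZ (V : DVal K) (hϖ0 : ϖ ≠ 0) (hvϖ : V.ν ϖ = 1)
    {B C : K} {m : ℤ} (h : Dom V m B C) (n : ℤ) :
    ∃ t : QuaternionAlgebra K a 0 ϖ, t ≠ 0 ∧ ∃ B' C' : K, Dom V n B' C' ∧
      qtau t * (⟨0, 0, B, C⟩ : QuaternionAlgebra K a 0 ϖ) * t = ⟨0, 0, B', C'⟩ := by
  rcases Int.even_or_odd (n - m) with ⟨j, hj⟩ | ⟨j, hj⟩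
  · set c : K := ϖ ^ j with hc
    have hc0 : c ≠ 0 := zpow_ne_zero j hϖ0
    have hcν : V.ν c = j := by rw [hc, nu_zpow V hϖ0, hvϖ]; ring
    have hc2 : (c ^ 2 : K) ≠ 0 := pow_ne_zero 2 hc0
    have hc2ν : V.ν (c ^ 2) = 2 * j := by rw [nu_pow V hc0, hcν]; push_cast; ring
    have hdom := dom_scale V h hc2 hc2 hc2ν hc2ν
    rw [show 2 * j + m = n by omega] at hdom
    exact ⟨⟨c, 0, 0, 0⟩, mk_ne_zero_of_re hc0, c ^ 2 * B, c ^ 2 * C, hdom,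
      by ext <;> simp [qtau] <;> ring⟩
  · set c : K := ϖ ^ j with hc
    have hc0 : c ≠ 0 := zpow_ne_zero j hϖ0
    have hcν : V.ν c = j := by rw [hc, nu_zpow V hϖ0, hvϖ]; ring
    have he1 : -(ϖ * c ^ 2) ≠ 0 := neg_ne_zero.2 (mul_ne_zero hϖ0 (pow_ne_zero 2 hc0))
    have he2 : (ϖ * c ^ 2 : K) ≠ 0 := mul_ne_zero hϖ0 (pow_ne_zero 2 hc0)
    have he2ν : V.ν (ϖ * c ^ 2) = 1 + 2 * j := by
      rw [V.ν_mul _ _ hϖ0 (pow_ne_zero 2 hc0), nu_pow V hc0, hcν, hvϖ]; push_cast; ring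
    have he1ν : V.ν (-(ϖ * c ^ 2)) = 1 + 2 * j := by rw [nu_neg V he2]; exact he2ν
    have hdom := dom_scale V h he1 he2 he1ν he2ν
    rw [show 1 + 2 * j + m = n by omega] at hdom
    exact ⟨⟨0, 0, c, 0⟩, mk_ne_zero_of_imJ hc0, -(ϖ * c ^ 2) * B, (ϖ * c ^ 2) * C, hdom,
      by ext <;> simp [qtau] <;> ring⟩


theorem pure_lemma (V : DVal K) (hcomp : V.IsComplete) (h2 : V.ResCharNeTwo)
    (ha0 : a ≠ 0) (hva : V.ν a = 0) (hϖ0 : ϖ ≠ 0) (hvϖ : V.ν ϖ = 1)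
    (haniso : QAniso a ϖ) {α β γ : K} (h0 : ¬(α = 0 ∧ β = 0 ∧ γ = 0)) (n₁ n₂ : ℤ) :
    (∃ t : QuaternionAlgebra K a 0 ϖ, t ≠ 0 ∧ ∃ A : K, A ≠ 0 ∧ V.ν A = n₁ ∧
        qtau t * (⟨0, α, β, γ⟩ : QuaternionAlgebra K a 0 ϖ) * t = ⟨0, A, 0, 0⟩) ∨
    (∃ t : QuaternionAlgebra K a 0 ϖ, t ≠ 0 ∧ ∃ B C : K, Dom V n₂ B C ∧
        qtau t * (⟨0, α, β, γ⟩ : QuaternionAlgebra K a 0 ϖ) * t = ⟨0, 0, B, C⟩) := by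
  by_cases hβγ : β = 0 ∧ γ = 0
  · obtain ⟨rfl, rfl⟩ := hβγ
    have hα : α ≠ 0 := fun h => h0 ⟨h, rfl, rfl⟩
    exact Or.inl (scaleX V hϖ0 hvϖ hα n₁)
  · obtain ⟨m, hm⟩ := dom_exists V hβγ
    have hBC := binDom V hcomp h2 ha0 hva haniso hm
    by_cases hα : α = 0
    · subst hα
      exact Or.inr (scaleYZ V hϖ0 hvϖ hm n₂)
    by_cases hle : V.ν α ≤ m
    · -- x-part dominates
      left
      set η : K := ϖ * (β ^ 2 - a * γ ^ 2) / (a * α ^ 2) with hηdef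
      have hden : a * α ^ 2 ≠ 0 := mul_ne_zero ha0 (pow_ne_zero 2 hα)
      have hnum : ϖ * (β ^ 2 - a * γ ^ 2) ≠ 0 := mul_ne_zero hϖ0 hBC.1
      have hη : 1 ≤ V.ν η := by
        rw [hηdef, nu_div V hnum hden, V.ν_mul _ _ hϖ0 hBC.1,
          V.ν_mul _ _ ha0 (pow_ne_zero 2 hα), nu_pow V hα, hvϖ, hva, hBC.2]
        push_cast; omega
      obtain ⟨s, hs0, hsν, hs2⟩ := hensel V hcomp h2 (Or.inr hη)
      have key : a * α ^ 2 * s ^ 2 = a * α ^ 2 + ϖ * (β ^ 2 - a * γ ^ 2) := by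
        rw [hs2, hηdef]; field_simp <;> ring
      have h₁ : (⟨0, α, β, γ⟩ : QuaternionAlgebra K a 0 ϖ) * ⟨0, α, β, γ⟩ =
          ⟨a * α ^ 2 + ϖ * (β ^ 2 - a * γ ^ 2), 0, 0, 0⟩ := by
        ext <;> simp <;> ring
      have h₂ : (⟨0, α * s, 0, 0⟩ : QuaternionAlgebra K a 0 ϖ) * ⟨0, α * s, 0, 0⟩ =
          ⟨a * α ^ 2 * s ^ 2, 0, 0, 0⟩ := by
        ext <;> simp <;> ring
      have hsq : (⟨0, α, β, γ⟩ : QuaternionAlgebra K a 0 ϖ) * ⟨0, α, β, γ⟩ =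
          (⟨0, α * s, 0, 0⟩ : QuaternionAlgebra K a 0 ϖ) * ⟨0, α * s, 0, 0⟩ := by
        rw [h₁, h₂, key]
      obtain ⟨t₁, ht₁, c, hc, hconj⟩ := conj_core haniso _ _ hsq
      have hconj' : qtau t₁ * (⟨0, α, β, γ⟩ : QuaternionAlgebra K a 0 ϖ) * t₁ =
          ⟨0, c * (α * s), 0, 0⟩ := by
        rw [hconj]; ext <;> simp
      have hA1 : c * (α * s) ≠ 0 := mul_ne_zero hc (mul_ne_zero hα hs0)
      obtain ⟨t₂, ht₂, A, hA, hAν, hsc⟩ := scaleX V hϖ0 hvϖ hA1 n₁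
      refine ⟨t₁ * t₂, qmul_ne haniso ht₁ ht₂, A, hA, hAν, ?_⟩
      rw [conj_comp, hconj', hsc]
    · -- yz-part dominates
      right
      have hle' : m + 1 ≤ V.ν α := by omega
      set η : K := a * α ^ 2 / (ϖ * (β ^ 2 - a * γ ^ 2)) with hηdef
      have hden : ϖ * (β ^ 2 - a * γ ^ 2) ≠ 0 := mul_ne_zero hϖ0 hBC.1
      have hnum : a * α ^ 2 ≠ 0 := mul_ne_zero ha0 (pow_ne_zero 2 hα)
      have hη : 1 ≤ V.ν η := by
        rw [hηdef, nu_div V hnum hden, V.ν_mul _ _ hϖ0 hBC.1,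
          V.ν_mul _ _ ha0 (pow_ne_zero 2 hα), nu_pow V hα, hvϖ, hva, hBC.2]
        push_cast; omega
      obtain ⟨s, hs0, hsν, hs2⟩ := hensel V hcomp h2 (Or.inr hη)
      have key : ϖ * (β ^ 2 - a * γ ^ 2) * s ^ 2 =
          a * α ^ 2 + ϖ * (β ^ 2 - a * γ ^ 2) := by
        rw [hs2, hηdef]; field_simp [hBC.1] <;> ring
      have h₁ : (⟨0, α, β, γ⟩ : QuaternionAlgebra K a 0 ϖ) * ⟨0, α, β, γ⟩ =
          ⟨a * α ^ 2 + ϖ * (β ^ 2 - a * γ ^ 2), 0, 0, 0⟩ := by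
        ext <;> simp <;> ring
      have h₂ : (⟨0, 0, s * β, s * γ⟩ : QuaternionAlgebra K a 0 ϖ) * ⟨0, 0, s * β, s * γ⟩ =
          ⟨ϖ * (β ^ 2 - a * γ ^ 2) * s ^ 2, 0, 0, 0⟩ := by
        ext <;> simp <;> ring
      have hsq : (⟨0, α, β, γ⟩ : QuaternionAlgebra K a 0 ϖ) * ⟨0, α, β, γ⟩ =
          (⟨0, 0, s * β, s * γ⟩ : QuaternionAlgebra K a 0 ϖ) * ⟨0, 0, s * β, s * γ⟩ := by
        rw [h₁, h₂, key]
      obtain ⟨t₁, ht₁, c, hc, hconj⟩ := conj_core haniso _ _ hsq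
      have hconj' : qtau t₁ * (⟨0, α, β, γ⟩ : QuaternionAlgebra K a 0 ϖ) * t₁ =
          ⟨0, 0, (c * s) * β, (c * s) * γ⟩ := by
        rw [hconj]; ext <;> simp <;> ring
      have hcs : c * s ≠ 0 := mul_ne_zero hc hs0
      have hdom := dom_scale V hm hcs hcs rfl rfl
      obtain ⟨t₂, ht₂, B, C, hBCdom, hsc⟩ := scaleYZ V hϖ0 hvϖ hdom n₂
      refine ⟨t₁ * t₂, qmul_ne haniso ht₁ ht₂, B, C, hBCdom, ?_⟩
      rw [conj_comp, hconj', hsc]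


theorem final_i (V : DVal K) (hcomp : V.IsComplete) (h2 : V.ResCharNeTwo)
    (ha0 : a ≠ 0) (hva : V.ν a = 0) (haniso : QAniso a ϖ)
    {p q : K} (h : Dom V 0 p q) :
    (⟨p, q, 0, 0⟩ : QuaternionAlgebra K a 0 ϖ).imJ = 0 ∧
    (⟨p, q, 0, 0⟩ : QuaternionAlgebra K a 0 ϖ).imK = 0 ∧
    V.Int (⟨p, q, 0, 0⟩ : QuaternionAlgebra K a 0 ϖ).re ∧
    V.Int (⟨p, q, 0, 0⟩ : QuaternionAlgebra K a 0 ϖ).imI ∧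
    qnu V a ϖ (⟨p, q, 0, 0⟩ : QuaternionAlgebra K a 0 ϖ) = 0 := by
  obtain ⟨hbne, hbν⟩ := binDom V hcomp h2 ha0 hva haniso h
  have hqn : qnrd a ϖ (⟨p, q, 0, 0⟩ : QuaternionAlgebra K a 0 ϖ) = p ^ 2 - a * q ^ 2 := by
    simp [qnrd]
  refine ⟨rfl, rfl, h.1, h.2.1, ?_⟩
  rw [qnu, hqn, hbν]; norm_num

theorem final_ii (V : DVal K) (hcomp : V.IsComplete) (h2 : V.ResCharNeTwo)
    (ha0 : a ≠ 0) (hva : V.ν a = 0) (hϖ0 : ϖ ≠ 0) (hvϖ : V.ν ϖ = 1)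
    (haniso : QAniso a ϖ) {p q : K} (h : Dom V 0 p q) :
    (⟨0, 0, p, q⟩ : QuaternionAlgebra K a 0 ϖ).re = 0 ∧
    (⟨0, 0, p, q⟩ : QuaternionAlgebra K a 0 ϖ).imI = 0 ∧
    V.Int (⟨0, 0, p, q⟩ : QuaternionAlgebra K a 0 ϖ).imJ ∧
    V.Int (⟨0, 0, p, q⟩ : QuaternionAlgebra K a 0 ϖ).imK ∧
    qnu V a ϖ (⟨0, 0, p, q⟩ : QuaternionAlgebra K a 0 ϖ) = 1 / 2 := by
  obtain ⟨hbne, hbν⟩ := binDom V hcomp h2 ha0 hva haniso h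
  have hqn : qnrd a ϖ (⟨0, 0, p, q⟩ : QuaternionAlgebra K a 0 ϖ) =
      -(ϖ * (p ^ 2 - a * q ^ 2)) := by
    simp [qnrd]; ring
  have hν : V.ν (qnrd a ϖ (⟨0, 0, p, q⟩ : QuaternionAlgebra K a 0 ϖ)) = 1 := by
    rw [hqn, nu_neg V (mul_ne_zero hϖ0 hbne), V.ν_mul _ _ hϖ0 hbne, hvϖ, hbν]; omega
  refine ⟨rfl, rfl, h.1, h.2.1, ?_⟩
  rw [qnu, hν]; norm_num

theorem half_zero (h2 : (2 : K) ≠ 0) {x : K} (h : (2 : K) * x = 0) : x = 0 := by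
  rcases mul_eq_zero.1 h with h' | h'
  · exact absurd h' h2
  · exact h'

end Quat

end Stmt19Aux

open Stmt19Aux

/-- every one-dimensional ε-hermitian form over `(ℍ[K,a,ϖ], τ_λ)`,
`λ ∈ {1,x,y}`, is isometric either to a form with unit diagonal entry in the `O_K`-span of
`{1, x}`, or to a form with diagonal entry of value `1/2` in the `O_K`-span of `{y, z}`. -/
theorem stmt_19 (K : Type) [Field K] (V : DVal K)
    -- K is complete with residue field of characteristic ≠ 2
    (hcomp : V.IsComplete) (hchar : V.ResCharNeTwo)
    -- D = ℍ[K,a,ϖ] with a ∈ O_K^×, ϖ a uniformizer, D a division ring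
    (a ϖ : K) (ha0 : a ≠ 0) (hva : V.ν a = 0) (hϖ0 : ϖ ≠ 0) (hvϖ : V.ν ϖ = 1)
    (haniso : QAniso a ϖ)
    -- σ = τ_λ with λ ∈ {1, x, y} (μ = λ⁻¹)
    (lam mu : QuaternionAlgebra K a 0 ϖ)
    (hlam : lam = 1 ∨ lam = (⟨0, 1, 0, 0⟩ : QuaternionAlgebra K a 0 ϖ) ∨ lam = (⟨0, 0, 1, 0⟩ : QuaternionAlgebra K a 0 ϖ))
    (hmu : lam * mu = 1) (hmu' : mu * lam = 1)
    (σ : QuaternionAlgebra K a 0 ϖ → QuaternionAlgebra K a 0 ϖ)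
    (hσ : ∀ u, σ u = lam * qtau u * mu)
    -- ε ∈ {1, -1} and u is a nonzero ε-symmetric element
    (ε : K) (hε : ε = 1 ∨ ε = -1)
    (u : QuaternionAlgebra K a 0 ϖ) (hu0 : u ≠ 0) (hsym : σ u = ε • u) :
    ∃ t : QuaternionAlgebra K a 0 ϖ, IsUnit t ∧
      (((σ t * u * t).imJ = 0 ∧ (σ t * u * t).imK = 0 ∧
          V.Int (σ t * u * t).re ∧ V.Int (σ t * u * t).imI ∧
          qnu V a ϖ (σ t * u * t) = 0) ∨
        ((σ t * u * t).re = 0 ∧ (σ t * u * t).imI = 0 ∧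
          V.Int (σ t * u * t).imJ ∧ V.Int (σ t * u * t).imK ∧
          qnu V a ϖ (σ t * u * t) = 1 / 2)) := by
  have hv0 : ∀ t : QuaternionAlgebra K a 0 ϖ, σ t * u * t = lam * (qtau t * (mu * u) * t) := by
    intro t; rw [hσ t]; simp only [mul_assoc]
  have hwne : mu * u ≠ 0 := by
    intro hw
    apply hu0
    have h' : lam * (mu * u) = u := by rw [← mul_assoc, hmu, one_mul]
    rw [hw, mul_zero] at h'; exact h'.symm
  rcases hlam with rfl | rfl | rfl
  · -- lam = 1
    have hmu_eq : mu = 1 := by simpa using hmu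
    have hshape : (1 : QuaternionAlgebra K a 0 ϖ) * qtau u * mu =
        (⟨u.re, -u.imI, -u.imJ, -u.imK⟩ : QuaternionAlgebra K a 0 ϖ) := by
      rw [hmu_eq, one_mul, mul_one]; rfl
    have hcomp_eq : (⟨u.re, -u.imI, -u.imJ, -u.imK⟩ : QuaternionAlgebra K a 0 ϖ) = ε • u := by
      rw [← hshape, ← hσ u]; exact hsym
    have e_re : u.re = ε * u.re := by simpa using congrArg QuaternionAlgebra.re hcomp_eq
    have e_imI : -u.imI = ε * u.imI := by simpa using congrArg QuaternionAlgebra.imI hcomp_eq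
    have e_imJ : -u.imJ = ε * u.imJ := by simpa using congrArg QuaternionAlgebra.imJ hcomp_eq
    have e_imK : -u.imK = ε * u.imK := by simpa using congrArg QuaternionAlgebra.imK hcomp_eq
    rcases hε with rfl | rfl
    · -- ε = 1 : u scalar
      have himI : u.imI = 0 := half_zero hchar.1 (by linear_combination -e_imI)
      have himJ : u.imJ = 0 := half_zero hchar.1 (by linear_combination -e_imJ)
      have himK : u.imK = 0 := half_zero hchar.1 (by linear_combination -e_imK)
      have hδ : u.re ≠ 0 := fun h => hu0 (QuaternionAlgebra.ext h himI himJ himK)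
      obtain ⟨t, ht, δ', hδ', hδν, hres⟩ := scaleSc V hϖ0 hvϖ hδ 0
      refine ⟨t, isUnit_of_ne haniso ht, Or.inl ?_⟩
      have hmuu : mu * u = (⟨u.re, 0, 0, 0⟩ : QuaternionAlgebra K a 0 ϖ) := by
        rw [hmu_eq, one_mul]; exact QuaternionAlgebra.ext rfl himI himJ himK
      have hv : σ t * u * t = (⟨δ', 0, 0, 0⟩ : QuaternionAlgebra K a 0 ϖ) := by
        rw [hv0 t, hmuu, hres, one_mul]
      rw [hv]
      exact final_i V hcomp hchar ha0 hva haniso (dom_unit_l V hδ' hδν (Or.inl rfl))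
    · -- ε = -1 : u pure
      have hre : u.re = 0 := half_zero hchar.1 (by linear_combination e_re)
      have hmuu : mu * u = (⟨0, u.imI, u.imJ, u.imK⟩ : QuaternionAlgebra K a 0 ϖ) := by
        rw [hmu_eq, one_mul]; exact QuaternionAlgebra.ext hre rfl rfl rfl
      have hne3 : ¬(u.imI = 0 ∧ u.imJ = 0 ∧ u.imK = 0) := by
        rintro ⟨hh1, hh2, hh3⟩
        exact hu0 (QuaternionAlgebra.ext hre hh1 hh2 hh3)
      rcases pure_lemma V hcomp hchar ha0 hva hϖ0 hvϖ haniso hne3 0 0 with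
        ⟨t, ht, A, hA, hAν, hres⟩ | ⟨t, ht, B, C, hBC, hres⟩
      · refine ⟨t, isUnit_of_ne haniso ht, Or.inl ?_⟩
        have hv : σ t * u * t = (⟨0, A, 0, 0⟩ : QuaternionAlgebra K a 0 ϖ) := by
          rw [hv0 t, hmuu, hres, one_mul]
        rw [hv]
        exact final_i V hcomp hchar ha0 hva haniso (dom_unit_r V hA hAν (Or.inl rfl))
      · refine ⟨t, isUnit_of_ne haniso ht, Or.inr ?_⟩
        have hv : σ t * u * t = (⟨0, 0, B, C⟩ : QuaternionAlgebra K a 0 ϖ) := by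
          rw [hv0 t, hmuu, hres, one_mul]
        rw [hv]
        exact final_ii V hcomp hchar ha0 hva hϖ0 hvϖ haniso hBC
  · -- lam = x
    have hxinv : (⟨0, 1, 0, 0⟩ : QuaternionAlgebra K a 0 ϖ) * ⟨0, a⁻¹, 0, 0⟩ = 1 := by
      ext <;> simp <;> field_simp
    have hmu_eq : mu = (⟨0, a⁻¹, 0, 0⟩ : QuaternionAlgebra K a 0 ϖ) := by
      calc mu = mu * ((⟨0, 1, 0, 0⟩ : QuaternionAlgebra K a 0 ϖ) * ⟨0, a⁻¹, 0, 0⟩) := by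
            rw [hxinv, mul_one]
        _ = (mu * ⟨0, 1, 0, 0⟩) * ⟨0, a⁻¹, 0, 0⟩ := by rw [mul_assoc]
        _ = ⟨0, a⁻¹, 0, 0⟩ := by rw [hmu', one_mul]
    have hshape : (⟨0, 1, 0, 0⟩ : QuaternionAlgebra K a 0 ϖ) * qtau u * mu =
        (⟨u.re, -u.imI, u.imJ, u.imK⟩ : QuaternionAlgebra K a 0 ϖ) := by
      rw [hmu_eq]; ext <;> simp [qtau] <;> field_simp <;> ring
    have hcomp_eq : (⟨u.re, -u.imI, u.imJ, u.imK⟩ : QuaternionAlgebra K a 0 ϖ) = ε • u := by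
      rw [← hshape, ← hσ u]; exact hsym
    have e_re : u.re = ε * u.re := by simpa using congrArg QuaternionAlgebra.re hcomp_eq
    have e_imI : -u.imI = ε * u.imI := by simpa using congrArg QuaternionAlgebra.imI hcomp_eq
    have e_imJ : u.imJ = ε * u.imJ := by simpa using congrArg QuaternionAlgebra.imJ hcomp_eq
    have e_imK : u.imK = ε * u.imK := by simpa using congrArg QuaternionAlgebra.imK hcomp_eq
    rcases hε with rfl | rfl
    · -- ε = 1 : u ∈ span{1,y,z}, w = mu*u pure
      have himI : u.imI = 0 := half_zero hchar.1 (by linear_combination -e_imI)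
      have hmuu : mu * u =
          (⟨0, a⁻¹ * u.re, u.imK, a⁻¹ * u.imJ⟩ : QuaternionAlgebra K a 0 ϖ) := by
        rw [hmu_eq]; ext <;> simp [himI] <;> field_simp <;> ring
      have hne3 : ¬(a⁻¹ * u.re = 0 ∧ u.imK = 0 ∧ a⁻¹ * u.imJ = 0) := by
        rintro ⟨hh1, hh2, hh3⟩
        apply hwne; rw [hmuu]
        exact QuaternionAlgebra.ext rfl hh1 hh2 hh3
      rcases pure_lemma V hcomp hchar ha0 hva hϖ0 hvϖ haniso hne3 0 0 with
        ⟨t, ht, A, hA, hAν, hres⟩ | ⟨t, ht, B, C, hBC, hres⟩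
      · refine ⟨t, isUnit_of_ne haniso ht, Or.inl ?_⟩
        have hvmul : (⟨0, 1, 0, 0⟩ : QuaternionAlgebra K a 0 ϖ) * ⟨0, A, 0, 0⟩ =
            (⟨a * A, 0, 0, 0⟩ : QuaternionAlgebra K a 0 ϖ) := by
          ext <;> simp <;> ring
        have hv : σ t * u * t = (⟨a * A, 0, 0, 0⟩ : QuaternionAlgebra K a 0 ϖ) := by
          rw [hv0 t, hmuu, hres, hvmul]
        rw [hv]
        refine final_i V hcomp hchar ha0 hva haniso (dom_unit_l V (mul_ne_zero ha0 hA)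
          (by rw [V.ν_mul _ _ ha0 hA, hva, hAν]; omega) (Or.inl rfl))
      · refine ⟨t, isUnit_of_ne haniso ht, Or.inr ?_⟩
        have hvmul : (⟨0, 1, 0, 0⟩ : QuaternionAlgebra K a 0 ϖ) * ⟨0, 0, B, C⟩ =
            (⟨0, 0, a * C, B⟩ : QuaternionAlgebra K a 0 ϖ) := by
          ext <;> simp <;> ring
        have hv : σ t * u * t = (⟨0, 0, a * C, B⟩ : QuaternionAlgebra K a 0 ϖ) := by
          rw [hv0 t, hmuu, hres, hvmul]
        rw [hv]
        exact final_ii V hcomp hchar ha0 hva hϖ0 hvϖ haniso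
          (dom_swap_unit V ha0 hva hBC)
    · -- ε = -1 : u ∈ span{x}, w scalar
      have hre : u.re = 0 := half_zero hchar.1 (by linear_combination e_re)
      have himJ : u.imJ = 0 := half_zero hchar.1 (by linear_combination e_imJ)
      have himK : u.imK = 0 := half_zero hchar.1 (by linear_combination e_imK)
      have hmuu : mu * u = (⟨u.imI, 0, 0, 0⟩ : QuaternionAlgebra K a 0 ϖ) := by
        rw [hmu_eq]; ext <;> simp [hre, himJ, himK] <;> field_simp
      have hδ : u.imI ≠ 0 := fun h => hu0 (QuaternionAlgebra.ext hre h himJ himK)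
      obtain ⟨t, ht, δ', hδ', hδν, hres⟩ := scaleSc V hϖ0 hvϖ hδ 0
      refine ⟨t, isUnit_of_ne haniso ht, Or.inl ?_⟩
      have hvmul : (⟨0, 1, 0, 0⟩ : QuaternionAlgebra K a 0 ϖ) * ⟨δ', 0, 0, 0⟩ =
          (⟨0, δ', 0, 0⟩ : QuaternionAlgebra K a 0 ϖ) := by
        ext <;> simp
      have hv : σ t * u * t = (⟨0, δ', 0, 0⟩ : QuaternionAlgebra K a 0 ϖ) := by
        rw [hv0 t, hmuu, hres, hvmul]
      rw [hv]
      exact final_i V hcomp hchar ha0 hva haniso (dom_unit_r V hδ' hδν (Or.inl rfl))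
  · -- lam = y
    have hyinv : (⟨0, 0, 1, 0⟩ : QuaternionAlgebra K a 0 ϖ) * ⟨0, 0, ϖ⁻¹, 0⟩ = 1 := by
      ext <;> simp <;> field_simp
    have hmu_eq : mu = (⟨0, 0, ϖ⁻¹, 0⟩ : QuaternionAlgebra K a 0 ϖ) := by
      calc mu = mu * ((⟨0, 0, 1, 0⟩ : QuaternionAlgebra K a 0 ϖ) * ⟨0, 0, ϖ⁻¹, 0⟩) := by
            rw [hyinv, mul_one]
        _ = (mu * ⟨0, 0, 1, 0⟩) * ⟨0, 0, ϖ⁻¹, 0⟩ := by rw [mul_assoc]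
        _ = ⟨0, 0, ϖ⁻¹, 0⟩ := by rw [hmu', one_mul]
    have hshape : (⟨0, 0, 1, 0⟩ : QuaternionAlgebra K a 0 ϖ) * qtau u * mu =
        (⟨u.re, u.imI, -u.imJ, u.imK⟩ : QuaternionAlgebra K a 0 ϖ) := by
      rw [hmu_eq]; ext <;> simp [qtau] <;> field_simp <;> ring
    have hcomp_eq : (⟨u.re, u.imI, -u.imJ, u.imK⟩ : QuaternionAlgebra K a 0 ϖ) = ε • u := by
      rw [← hshape, ← hσ u]; exact hsym
    have e_re : u.re = ε * u.re := by simpa using congrArg QuaternionAlgebra.re hcomp_eq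
    have e_imI : u.imI = ε * u.imI := by simpa using congrArg QuaternionAlgebra.imI hcomp_eq
    have e_imJ : -u.imJ = ε * u.imJ := by simpa using congrArg QuaternionAlgebra.imJ hcomp_eq
    have e_imK : u.imK = ε * u.imK := by simpa using congrArg QuaternionAlgebra.imK hcomp_eq
    rcases hε with rfl | rfl
    · -- ε = 1 : u ∈ span{1,x,z}, w pure
      have himJ : u.imJ = 0 := half_zero hchar.1 (by linear_combination -e_imJ)
      have hmuu : mu * u =
          (⟨0, -u.imK, ϖ⁻¹ * u.re, -(ϖ⁻¹ * u.imI)⟩ : QuaternionAlgebra K a 0 ϖ) := by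
        rw [hmu_eq]; ext <;> simp [himJ] <;> field_simp <;> ring
      have hne3 : ¬(-u.imK = 0 ∧ ϖ⁻¹ * u.re = 0 ∧ -(ϖ⁻¹ * u.imI) = 0) := by
        rintro ⟨hh1, hh2, hh3⟩
        apply hwne; rw [hmuu]
        exact QuaternionAlgebra.ext rfl hh1 hh2 hh3
      rcases pure_lemma V hcomp hchar ha0 hva hϖ0 hvϖ haniso hne3 0 (-1) with
        ⟨t, ht, A, hA, hAν, hres⟩ | ⟨t, ht, B, C, hBC, hres⟩
      · refine ⟨t, isUnit_of_ne haniso ht, Or.inr ?_⟩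
        have hvmul : (⟨0, 0, 1, 0⟩ : QuaternionAlgebra K a 0 ϖ) * ⟨0, A, 0, 0⟩ =
            (⟨0, 0, 0, -A⟩ : QuaternionAlgebra K a 0 ϖ) := by
          ext <;> simp
        have hv : σ t * u * t = (⟨0, 0, 0, -A⟩ : QuaternionAlgebra K a 0 ϖ) := by
          rw [hv0 t, hmuu, hres, hvmul]
        rw [hv]
        exact final_ii V hcomp hchar ha0 hva hϖ0 hvϖ haniso
          (dom_unit_r V (neg_ne_zero.2 hA) (by rw [nu_neg V hA]; exact hAν) (Or.inl rfl))
      · refine ⟨t, isUnit_of_ne haniso ht, Or.inl ?_⟩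
        have hvmul : (⟨0, 0, 1, 0⟩ : QuaternionAlgebra K a 0 ϖ) * ⟨0, 0, B, C⟩ =
            (⟨ϖ * B, -ϖ * C, 0, 0⟩ : QuaternionAlgebra K a 0 ϖ) := by
          ext <;> simp <;> ring
        have hv : σ t * u * t = (⟨ϖ * B, -ϖ * C, 0, 0⟩ : QuaternionAlgebra K a 0 ϖ) := by
          rw [hv0 t, hmuu, hres, hvmul]
        rw [hv]
        have hdom := dom_scale V hBC hϖ0 (neg_ne_zero.2 hϖ0) hvϖ
          (by rw [nu_neg V hϖ0]; exact hvϖ)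
        rw [show (1 : ℤ) + -1 = 0 by norm_num] at hdom
        exact final_i V hcomp hchar ha0 hva haniso hdom
    · -- ε = -1 : u ∈ span{y}, w scalar
      have hre : u.re = 0 := half_zero hchar.1 (by linear_combination e_re)
      have himI : u.imI = 0 := half_zero hchar.1 (by linear_combination e_imI)
      have himK : u.imK = 0 := half_zero hchar.1 (by linear_combination e_imK)
      have hmuu : mu * u = (⟨u.imJ, 0, 0, 0⟩ : QuaternionAlgebra K a 0 ϖ) := by
        rw [hmu_eq]; ext <;> simp [hre, himI, himK] <;> field_simp
      have hδ : u.imJ ≠ 0 := fun h => hu0 (QuaternionAlgebra.ext hre himI h himK)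
      obtain ⟨t, ht, δ', hδ', hδν, hres⟩ := scaleSc V hϖ0 hvϖ hδ 0
      refine ⟨t, isUnit_of_ne haniso ht, Or.inr ?_⟩
      have hvmul : (⟨0, 0, 1, 0⟩ : QuaternionAlgebra K a 0 ϖ) * ⟨δ', 0, 0, 0⟩ =
          (⟨0, 0, δ', 0⟩ : QuaternionAlgebra K a 0 ϖ) := by
        ext <;> simp
      have hv : σ t * u * t = (⟨0, 0, δ', 0⟩ : QuaternionAlgebra K a 0 ϖ) := by
        rw [hv0 t, hmuu, hres, hvmul]
      rw [hv]
      exact final_ii V hcomp hchar ha0 hva hϖ0 hvϖ haniso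
        (dom_unit_l V hδ' hδν (Or.inl rfl))
end
end
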